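/- arXiv:2304.12095 — 5 statements merged into one kernel-verified Lean document; each statement's English description precedes it below -/
import Mathlib

section
/- (Singleton Bound) Let 𝒞 ⊆ 𝕄 be a nonzero code and let r ∈ {1,…,dim(𝒞)}. Let j ∈ {1,…,ℓ} and 0 ≤ δ ≤ n_j − 1 be such that d_r(𝒞) − 1 ≥ Σ_{i=1}^{j−1} n_i + δ. Then dim(𝒞) ≤ Σ_{i=j}^{ℓ} m_i n_i − m_j δ + r − 1. -/
open Matrix Finset

section SumRank

variable {F : Type*} [Field F] [Fintype F] {ℓ : ℕ} {m n : Fin ℓ → ℕ}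

/-- The sum-rank weight of a tuple of matrices. -/
noncomputable def srk (C : ∀ i : Fin ℓ, Matrix (Fin (m i)) (Fin (n i)) F) : ℕ :=
  ∑ i, (C i).rank

/-- The weighted sum `∑ m i * rank (C i)`. -/
noncomputable def wsum (C : ∀ i : Fin ℓ, Matrix (Fin (m i)) (Fin (n i)) F) : ℕ :=
  ∑ i, m i * (C i).rank

/-- The minimum sum-rank distance of a code. -/
noncomputable def dmin (𝒞 : Submodule F (∀ i : Fin ℓ, Matrix (Fin (m i)) (Fin (n i)) F)) : ℕ :=
  sInf {w | ∃ C ∈ 𝒞, C ≠ 0 ∧ srk C = w}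

/-- The maximum sum-rank weight of a code. -/
noncomputable def maxsrk (𝒞 : Submodule F (∀ i : Fin ℓ, Matrix (Fin (m i)) (Fin (n i)) F)) : ℕ :=
  sSup {w | ∃ C ∈ 𝒞, srk C = w}

/-- An optimal rank-metric anticode in `F^(m×n)`. -/
def IsOptRkAnticode {m n : ℕ} (A : Submodule F (Matrix (Fin m) (Fin n) F)) : Prop :=
  Module.finrank F A = m * sSup {r | ∃ M ∈ A, (M : Matrix (Fin m) (Fin n) F).rank = r}

/-- An optimal sum-rank-metric anticode. -/
def IsOptAnticode (𝒞 : Submodule F (∀ i : Fin ℓ, Matrix (Fin (m i)) (Fin (n i)) F)) : Prop :=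
  Module.finrank F 𝒞 = sSup {w | ∃ C ∈ 𝒞, wsum C = w}

/-- The weight of a code. -/
noncomputable def wtCode (𝒞 : Submodule F (∀ i : Fin ℓ, Matrix (Fin (m i)) (Fin (n i)) F)) : ℕ :=
  sInf {w | ∃ A : ∀ i : Fin ℓ, Submodule F (Matrix (Fin (m i)) (Fin (n i)) F),
    (∀ i, IsOptRkAnticode (A i)) ∧ 𝒞 ≤ Submodule.pi Set.univ A ∧
    w = maxsrk (Submodule.pi Set.univ A)}

/-- The `r`-th generalized sum-rank weight of a code. -/
noncomputable def genWt (𝒞 : Submodule F (∀ i : Fin ℓ, Matrix (Fin (m i)) (Fin (n i)) F))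
    (r : ℕ) : ℕ :=
  sInf {w | ∃ 𝒟 : Submodule F (∀ i : Fin ℓ, Matrix (Fin (m i)) (Fin (n i)) F),
    𝒟 ≤ 𝒞 ∧ r ≤ Module.finrank F 𝒟 ∧ w = wtCode 𝒟}

/-- The trace-dual of a code. -/
def dualCode (𝒞 : Submodule F (∀ i : Fin ℓ, Matrix (Fin (m i)) (Fin (n i)) F)) :
    Submodule F (∀ i : Fin ℓ, Matrix (Fin (m i)) (Fin (n i)) F) where
  carrier := {D | ∀ C ∈ 𝒞, ∑ i, Matrix.trace (D i * (C i)ᵀ) = 0}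
  add_mem' := by
    intro a b ha hb C hC
    have h1 := ha C hC
    have h2 := hb C hC
    simp only [Pi.add_apply, Matrix.add_mul, Matrix.trace_add, Finset.sum_add_distrib,
      Set.mem_setOf_eq] at *
    rw [h1, h2, add_zero]
  zero_mem' := by
    intro C hC
    simp
  smul_mem' := by
    intro r a ha C hC
    have h1 := ha C hC
    simp only [Pi.smul_apply, Matrix.smul_mul, Matrix.trace_smul, ← Finset.smul_sum,
      Set.mem_setOf_eq] at *
    rw [h1, smul_zero]

/-- The MSRD property. -/
def IsMSRD (𝒞 : Submodule F (∀ i : Fin ℓ, Matrix (Fin (m i)) (Fin (n i)) F)) : Prop :=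
  ∃ (j : Fin ℓ) (δ : ℕ), δ ≤ n j - 1 ∧
    dmin 𝒞 = ∑ i ∈ Finset.Iio j, n i + δ + 1 ∧
    Module.finrank F 𝒞 = ∑ i ∈ Finset.Ici j, m i * n i - δ * m j

end SumRank


section ColSub
variable (F : Type*) [Field F]

/-- Matrices supported on the first `d` columns. -/
def colSub (m n d : ℕ) : Submodule F (Matrix (Fin m) (Fin n) F) where
  carrier := {M | ∀ (a : Fin m) (b : Fin n), d ≤ (b : ℕ) → M a b = 0}
  add_mem' := by
    intro M N hM hN a b hb
    simp [hM a b hb, hN a b hb]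
  zero_mem' := by intro a b hb; simp
  smul_mem' := by
    intro c M hM a b hb
    simp [hM a b hb]

variable {F}

lemma colSub_rank_le {m n d : ℕ} (hdn : d ≤ n) {M : Matrix (Fin m) (Fin n) F}
    (hM : M ∈ colSub F m n d) : M.rank ≤ d := by
  set M₁ : Matrix (Fin m) (Fin d) F := Matrix.of fun a c => M a (Fin.castLE hdn c) with hM₁
  set M₂ : Matrix (Fin d) (Fin n) F :=
    Matrix.of fun c b => if (c : ℕ) = (b : ℕ) then (1 : F) else 0 with hM₂
  have hfac : M = M₁ * M₂ := by
    ext a b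
    rw [Matrix.mul_apply]
    by_cases hb : (b : ℕ) < d
    · rw [Finset.sum_eq_single ⟨(b : ℕ), hb⟩]
      · simp [hM₁, hM₂, Fin.castLE]
      · intro c _ hc
        have : (c : ℕ) ≠ (b : ℕ) := by
          intro h; apply hc; exact Fin.ext h
        simp [hM₂, this]
      · simp
    · rw [hM a b (le_of_not_gt hb)]
      symm
      apply Finset.sum_eq_zero
      intro c _
      have : (c : ℕ) ≠ (b : ℕ) := by omega
      simp [hM₂, this]
  calc M.rank = (M₁ * M₂).rank := by rw [hfac]
    _ ≤ M₁.rank := Matrix.rank_mul_le_left _ _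
    _ ≤ d := Matrix.rank_le_width _

lemma colSub_exists_rank {m n d : ℕ} (hdn : d ≤ n) (hdm : d ≤ m) :
    ∃ M ∈ colSub F m n d, M.rank = d := by
  classical
  set E : Matrix (Fin m) (Fin n) F :=
    Matrix.of fun a b => if (a : ℕ) = (b : ℕ) ∧ (b : ℕ) < d then (1 : F) else 0 with hE
  have hmem : E ∈ colSub F m n d := by
    intro a b hb
    have : ¬ ((a : ℕ) = (b : ℕ) ∧ (b : ℕ) < d) := by omega
    simp [hE, this]
  refine ⟨E, hmem, le_antisymm (colSub_rank_le hdn hmem) ?_⟩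
  set P : Matrix (Fin d) (Fin m) F :=
    Matrix.of fun c a => if (c : ℕ) = (a : ℕ) then (1 : F) else 0 with hP
  set Q : Matrix (Fin n) (Fin d) F :=
    Matrix.of fun b c => if (b : ℕ) = (c : ℕ) then (1 : F) else 0 with hQ
  have hPE : P * E = Matrix.of fun (c : Fin d) (b : Fin n) =>
      if (c : ℕ) = (b : ℕ) then (1 : F) else 0 := by
    ext c b
    rw [Matrix.mul_apply]
    rw [Finset.sum_eq_single (⟨(c : ℕ), lt_of_lt_of_le c.2 hdm⟩ : Fin m)]
    · by_cases h : (c : ℕ) = (b : ℕ)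
      · have : (b : ℕ) < d := by omega
        simp [hP, hE, h, this]
      · simp [hP, hE, h]
    · intro a _ ha
      have : (c : ℕ) ≠ (a : ℕ) := by
        intro h; apply ha; exact Fin.ext h.symm
      simp [hP, this]
    · simp
  have hPEQ : P * E * Q = (1 : Matrix (Fin d) (Fin d) F) := by
    rw [hPE]
    ext c c'
    rw [Matrix.mul_apply]
    rw [Finset.sum_eq_single (⟨(c' : ℕ), lt_of_lt_of_le c'.2 hdn⟩ : Fin n)]
    · by_cases h : (c : ℕ) = (c' : ℕ)
      · have : c = c' := Fin.ext h
        simp [hQ, h, this, Matrix.one_apply]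
      · have : c ≠ c' := fun hh => h (by rw [hh])
        simp [hQ, h, this, Matrix.one_apply]
    · intro b _ hb
      have : (b : ℕ) ≠ (c' : ℕ) := by
        intro h; apply hb; exact Fin.ext h
      simp [hQ, this]
    · simp
  have : d = (P * E * Q).rank := by rw [hPEQ, Matrix.rank_one, Fintype.card_fin]
  rw [this]
  calc (P * E * Q).rank ≤ (P * E).rank := Matrix.rank_mul_le_left _ _
    _ ≤ E.rank := Matrix.rank_mul_le_right _ _

lemma colSub_finrank (m n d : ℕ) (hdn : d ≤ n) :
    Module.finrank F (colSub F m n d) = m * d := by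
  classical
  let φ : colSub F m n d →ₗ[F] Matrix (Fin m) (Fin d) F :=
    { toFun := fun M => Matrix.of fun a c => (M : Matrix (Fin m) (Fin n) F) a (Fin.castLE hdn c)
      map_add' := by intro M N; ext a c; simp
      map_smul' := by intro r M; ext a c; simp }
  have hinj : Function.Injective φ := by
    intro M N h
    ext a b
    by_cases hb : (b : ℕ) < d
    · have := congrFun (congrFun h a) ⟨(b : ℕ), hb⟩
      simpa [φ, Fin.castLE] using this
    · rw [M.2 a b (le_of_not_gt hb), N.2 a b (le_of_not_gt hb)]
  have hsurj : Function.Surjective φ := by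
    intro N
    refine ⟨⟨Matrix.of fun a b => if h : (b : ℕ) < d then N a ⟨(b : ℕ), h⟩ else 0, ?_⟩, ?_⟩
    · intro a b hb
      simp [Matrix.of_apply, dif_neg (not_lt.mpr hb)]
    · ext a c
      simp [φ, Fin.castLE, c.2]
  have := LinearEquiv.finrank_eq (LinearEquiv.ofBijective φ ⟨hinj, hsurj⟩)
  rw [this, Module.finrank_matrix, Fintype.card_fin, Fintype.card_fin,
    Module.finrank_self, mul_one]

end ColSub

section Aux2
variable {F : Type*} [Field F]

lemma colSub_sSup_rank {m n d : ℕ} (hdn : d ≤ n) (hdm : d ≤ m) :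
    sSup {r | ∃ M ∈ colSub F m n d, (M : Matrix (Fin m) (Fin n) F).rank = r} = d := by
  apply le_antisymm
  · apply csSup_le
    · obtain ⟨M, hM, hr⟩ := colSub_exists_rank (F := F) hdn hdm
      exact ⟨d, M, hM, hr⟩
    · rintro w ⟨M, hM, rfl⟩
      exact colSub_rank_le hdn hM
  · apply le_csSup
    · refine ⟨d, ?_⟩
      rintro w ⟨M, hM, rfl⟩
      exact colSub_rank_le hdn hM
    · obtain ⟨M, hM, hr⟩ := colSub_exists_rank (F := F) hdn hdm
      exact ⟨M, hM, hr⟩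

lemma finrank_submodule_pi {ι : Type*} [Fintype ι] {φ : ι → Type*}
    [∀ i, AddCommGroup (φ i)] [∀ i, Module F (φ i)] [∀ i, FiniteDimensional F (φ i)]
    (A : ∀ i, Submodule F (φ i)) :
    Module.finrank F (Submodule.pi Set.univ A) = ∑ i, Module.finrank F (A i) := by
  classical
  let e : (∀ i, A i) ≃ₗ[F] Submodule.pi Set.univ A :=
    { toFun := fun y => ⟨fun i => (y i : φ i), fun i _ => (y i).2⟩
      map_add' := by intro a b; rfl
      map_smul' := by intro c a; rfl
      invFun := fun x => fun i => ⟨x.1 i, x.2 i (Set.mem_univ i)⟩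
      left_inv := by intro a; rfl
      right_inv := by intro a; rfl }
  rw [← LinearEquiv.finrank_eq e, Module.finrank_pi_fintype]

end Aux2

/-- **Singleton Bound** for generalized sum-rank weights: if
`d_r(𝒞) - 1 ≥ n₁ + ⋯ + n_{j-1} + δ` with `0 ≤ δ ≤ n_j - 1`, then
`dim 𝒞 ≤ ∑_{i ≥ j} m_i n_i - m_j δ + r - 1`. -/
theorem singleton_bound {F : Type*} [Field F] [Fintype F] {ℓ : ℕ}
    (m n : Fin ℓ → ℕ) (hℓ : 0 < ℓ) (hm : ∀ i j : Fin ℓ, i ≤ j → m j ≤ m i)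
    (hmpos : ∀ i, 0 < m i) (hnm : ∀ i, n i ≤ m i) (hnpos : ∀ i, 0 < n i)
    (𝒞 : Submodule F (∀ i : Fin ℓ, Matrix (Fin (m i)) (Fin (n i)) F)) (h𝒞 : 𝒞 ≠ ⊥)
    (r : ℕ) (hr : 1 ≤ r) (hrdim : r ≤ Module.finrank F 𝒞)
    (j : Fin ℓ) (δ : ℕ) (hδ : δ ≤ n j - 1)
    (hd : ∑ i ∈ Finset.Iio j, n i + δ ≤ genWt 𝒞 r - 1) :
    Module.finrank F 𝒞 ≤ ∑ i ∈ Finset.Ici j, m i * n i - m j * δ + r - 1 := by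
  classical
  -- the column bound for each block
  set d : Fin ℓ → ℕ := fun i => if i < j then n i else if i = j then δ else 0 with hd_def
  have hdn : ∀ i, d i ≤ n i := by
    intro i
    simp only [hd_def]
    split_ifs with h1 h2
    · exact le_rfl
    · have := hnpos j; subst h2; omega
    · exact Nat.zero_le _
  have hdm : ∀ i, d i ≤ m i := fun i => (hdn i).trans (hnm i)
  set A : ∀ i : Fin ℓ, Submodule F (Matrix (Fin (m i)) (Fin (n i)) F) :=
    fun i => colSub F (m i) (n i) (d i) with hA_def
  set W : Submodule F (∀ i : Fin ℓ, Matrix (Fin (m i)) (Fin (n i)) F) :=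
    Submodule.pi Set.univ A with hW_def
  have hWfin : Module.finrank F W = ∑ i, m i * d i := by
    rw [hW_def, finrank_submodule_pi]
    exact Finset.sum_congr rfl fun i _ => colSub_finrank (m i) (n i) (d i) (hdn i)
  have hunion : Finset.Iio j ∪ Finset.Ici j = Finset.univ := by
    ext i
    simp only [Finset.mem_union, Finset.mem_Iio, Finset.mem_Ici, Finset.mem_univ, iff_true]
    exact lt_or_ge i j
  have hdisj : Disjoint (Finset.Iio j) (Finset.Ici j) := by
    rw [Finset.disjoint_left]
    intro a ha hb
    exact absurd (Finset.mem_Ici.mp hb) (not_le.mpr (Finset.mem_Iio.mp ha))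
  have hIci : ∀ f : Fin ℓ → ℕ, ∑ i, f i = ∑ i ∈ Finset.Iio j, f i + ∑ i ∈ Finset.Ici j, f i := by
    intro f
    rw [← hunion, Finset.sum_union hdisj]
  have hIciIns : ∀ f : Fin ℓ → ℕ, ∑ i ∈ Finset.Ici j, f i = f j + ∑ i ∈ Finset.Ioi j, f i := by
    intro f
    rw [← Finset.Ioi_insert, Finset.sum_insert (by simp)]
  have hd_lt : ∀ i, i < j → d i = n i := by intro i h; simp [hd_def, h]
  have hd_gt : ∀ i, j < i → d i = 0 := by
    intro i h
    have h1 : ¬ i < j := by exact not_lt_of_gt h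
    have h2 : ¬ i = j := by exact Fin.ne_of_gt h
    simp [hd_def, h1, h2]
  have hd_j : d j = δ := by simp [hd_def]
  have e1 : ∑ i ∈ Finset.Iio j, d i = ∑ i ∈ Finset.Iio j, n i :=
    Finset.sum_congr rfl (fun i hi => hd_lt i (Finset.mem_Iio.mp hi))
  have e2 : ∑ i ∈ Finset.Ioi j, d i = 0 :=
    Finset.sum_eq_zero (fun i hi => hd_gt i (Finset.mem_Ioi.mp hi))
  have hsumd : ∑ i, d i = ∑ i ∈ Finset.Iio j, n i + δ := by
    rw [hIci d, hIciIns d, hd_j, e1, e2]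
    omega
  have e3 : ∑ i ∈ Finset.Iio j, m i * d i = ∑ i ∈ Finset.Iio j, m i * n i :=
    Finset.sum_congr rfl (fun i hi => by rw [hd_lt i (Finset.mem_Iio.mp hi)])
  have e4 : ∑ i ∈ Finset.Ioi j, m i * d i = 0 :=
    Finset.sum_eq_zero (fun i hi => by rw [hd_gt i (Finset.mem_Ioi.mp hi), Nat.mul_zero])
  have hsumdm : ∑ i, m i * d i = ∑ i ∈ Finset.Iio j, m i * n i + m j * δ := by
    rw [hIci (fun i => m i * d i), hIciIns (fun i => m i * d i), hd_j, e3, e4]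
    omega
  have hN : Module.finrank F (∀ i : Fin ℓ, Matrix (Fin (m i)) (Fin (n i)) F)
      = ∑ i, m i * n i := by
    rw [Module.finrank_pi_fintype]
    refine Finset.sum_congr rfl fun i _ => ?_
    rw [Module.finrank_matrix, Fintype.card_fin, Fintype.card_fin, Module.finrank_self, mul_one]
  have hsplitN : ∑ i, m i * n i
      = ∑ i ∈ Finset.Iio j, m i * n i + ∑ i ∈ Finset.Ici j, m i * n i := hIci _
  have hmjd : m j * δ ≤ ∑ i ∈ Finset.Ici j, m i * n i := by
    calc m j * δ ≤ m j * n j := Nat.mul_le_mul_left _ ((hdn j).trans_eq' hd_j)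
      _ ≤ ∑ i ∈ Finset.Ici j, m i * n i :=
        Finset.single_le_sum (f := fun i => m i * n i) (fun i _ => Nat.zero_le _)
          (Finset.mem_Ici.mpr le_rfl)
  have hCle : Module.finrank F 𝒞 ≤ ∑ i, m i * n i := hN ▸ Submodule.finrank_le 𝒞
  by_cases hs : ∑ i ∈ Finset.Iio j, n i + δ = 0
  · -- trivial case
    have hIio : Finset.Iio j = ∅ := by
      rw [Finset.eq_empty_iff_forall_notMem]
      intro i hi
      have h1 : n i = 0 := by
        have := Finset.single_le_sum (f := n) (fun i _ => Nat.zero_le _) hi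
        omega
      have := hnpos i
      omega
    have h0 : ∑ i ∈ Finset.Iio j, m i * n i = 0 := by rw [hIio]; simp
    have hδ0 : δ = 0 := by omega
    rw [hδ0, Nat.mul_zero, Nat.sub_zero]
    omega
  · -- main case: bound the kernel
    have hK : Module.finrank F (𝒞 ⊓ W : Submodule F _) ≤ r - 1 := by
      by_contra hcon
      have hrK : r ≤ Module.finrank F (𝒞 ⊓ W : Submodule F _) := by omega
      have h1 : genWt 𝒞 r ≤ wtCode (𝒞 ⊓ W) :=
        Nat.sInf_le ⟨𝒞 ⊓ W, inf_le_left, hrK, rfl⟩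
      have hopt : ∀ i, IsOptRkAnticode (A i) := by
        intro i
        unfold IsOptRkAnticode
        rw [hA_def]
        rw [colSub_sSup_rank (hdn i) (hdm i), colSub_finrank (m i) (n i) (d i) (hdn i)]
      have h2 : wtCode (𝒞 ⊓ W) ≤ maxsrk W :=
        Nat.sInf_le ⟨A, hopt, inf_le_right, rfl⟩
      have h3 : maxsrk W ≤ ∑ i, d i := by
        apply csSup_le
        · exact ⟨0, 0, W.zero_mem, by simp [srk]⟩
        · rintro w ⟨C, hC, rfl⟩
          unfold srk
          exact Finset.sum_le_sum fun i _ =>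
            colSub_rank_le (hdn i) (hC i (Set.mem_univ i))
      omega
    have heq := Submodule.finrank_sup_add_finrank_inf_eq 𝒞 W
    have hsup : Module.finrank F (𝒞 ⊔ W : Submodule F _) ≤ ∑ i, m i * n i :=
      hN ▸ Submodule.finrank_le _
    omega
end

section
/- (Classification of 𝔽_q-linear isometries) Let φ : 𝕄 → 𝕄 be an 𝔽_q-linear map with srk(φ(C)) = srk(C) for all C ∈ 𝕄. Then there exist a permutation σ of {1,…,ℓ} with the property that σ(i) = j implies m_i = m_j and n_i = n_j, and 𝔽_q-linear rank-preserving maps ψ_i : 𝔽_q^{m_i×n_i} → 𝔽_q^{m_i×n_i} (i.e. rk(ψ_i(M)) = rk(M) for all M) for i ∈ {1,…,ℓ}, such that φ(C_1,…,C_ℓ) = (ψ_1(C_{σ(1)}), …, ψ_ℓ(C_{σ(ℓ)})) for all (C_1,…,C_ℓ) ∈ 𝕄. -/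
open Matrix Finset

section AuxIsometry

variable {F : Type*} [Field F] [Fintype F]

section Aux
variable {ℓ : ℕ} {m n : Fin ℓ → ℕ}

lemma myrank_eq_zero_iff {a b : ℕ} (M : Matrix (Fin a) (Fin b) F) : M.rank = 0 ↔ M = 0 := by
  constructor
  · intro h
    have h0 : LinearMap.range M.mulVecLin = ⊥ := by
      rw [← Submodule.finrank_eq_zero (R := F)]; exact h
    have h2 : M.mulVecLin = 0 := LinearMap.range_eq_bot.mp h0
    ext i j
    have h3 : M.mulVec (Pi.single j 1) = 0 := by
      have := congrArg (fun f => f (Pi.single j (1:F))) h2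
      simpa [Matrix.mulVecLin] using this
    have h4 := congrFun h3 i
    simpa [Matrix.mulVec_single] using h4
  · rintro rfl; exact Matrix.rank_zero

lemma myrank_pos {a b : ℕ} {M : Matrix (Fin a) (Fin b) F} (h : M ≠ 0) : 1 ≤ M.rank :=
  Nat.one_le_iff_ne_zero.mpr (fun hc => h ((myrank_eq_zero_iff M).mp hc))

lemma srk_single (i : Fin ℓ) (M : Matrix (Fin (m i)) (Fin (n i)) F) :
    srk (Pi.single i M) = M.rank := by
  unfold srk
  rw [Finset.sum_eq_single i]
  · rw [Pi.single_eq_same]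
  · intro j _ hj
    rw [Pi.single_eq_of_ne hj, Matrix.rank_zero]
  · simp

lemma srk_eq_zero_iff (C : ∀ i : Fin ℓ, Matrix (Fin (m i)) (Fin (n i)) F) :
    srk C = 0 ↔ C = 0 := by
  unfold srk
  rw [Finset.sum_eq_zero_iff]
  constructor
  · intro h; funext i; exact (myrank_eq_zero_iff _).mp (h i (mem_univ i))
  · intro h i _; rw [h]; exact Matrix.rank_zero

lemma supp_of_srk_one (C : ∀ i : Fin ℓ, Matrix (Fin (m i)) (Fin (n i)) F) (h : srk C = 1) :
    ∃ k, C k ≠ 0 ∧ ∀ j ≠ k, C j = 0 := by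
  have h0 : C ≠ 0 := fun hc => by rw [hc, (srk_eq_zero_iff 0).mpr rfl] at h; omega
  have : ∃ k, C k ≠ 0 := by
    by_contra hc
    push_neg at hc
    exact h0 (funext hc)
  obtain ⟨k, hk⟩ := this
  refine ⟨k, hk, fun j hj => ?_⟩
  have h1 : 1 ≤ (C k).rank := myrank_pos hk
  have h2 : (C k).rank + (C j).rank ≤ srk C :=
    calc (C k).rank + (C j).rank = ∑ i ∈ ({k, j} : Finset (Fin ℓ)), (C i).rank :=
          (Finset.sum_pair (f := fun i => (C i).rank) (Ne.symm hj)).symm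
      _ ≤ ∑ i, (C i).rank := Finset.sum_le_sum_of_subset (Finset.subset_univ _)
  rw [h] at h2
  exact (myrank_eq_zero_iff _).mp (by omega)

lemma adj_same_block (x y : ∀ i : Fin ℓ, Matrix (Fin (m i)) (Fin (n i)) F) (p q : Fin ℓ)
    (hxp : x p ≠ 0) (hxs : ∀ j ≠ p, x j = 0) (hyq : y q ≠ 0) (hys : ∀ j ≠ q, y j = 0)
    (h : srk (x - y) ≤ 1) : p = q := by
  by_contra hpq
  have h1 : (x - y) p = x p := by simp [hys p hpq]
  have h2 : (x - y) q = - y q := by simp [hxs q (Ne.symm hpq)]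
  have h3 : ((x-y) p).rank + ((x-y) q).rank ≤ srk (x - y) :=
    calc ((x-y) p).rank + ((x-y) q).rank = ∑ i ∈ ({p, q} : Finset (Fin ℓ)), ((x-y) i).rank :=
          (Finset.sum_pair (f := fun i => ((x-y) i).rank) hpq).symm
      _ ≤ ∑ i, ((x-y) i).rank := Finset.sum_le_sum_of_subset (Finset.subset_univ _)
  have h4 : 1 ≤ ((x-y) p).rank := by rw [h1]; exact myrank_pos hxp
  have h5 : 1 ≤ ((x-y) q).rank := by rw [h2]; exact myrank_pos (neg_ne_zero.mpr hyq)
  omega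

end Aux

lemma myrank_vecMulVec_le {a b : ℕ} (u : Fin a → F) (v : Fin b → F) :
    (Matrix.vecMulVec u v).rank ≤ 1 := by
  rw [Matrix.vecMulVec_eq (ι := Unit)]
  calc (Matrix.replicateCol Unit u * Matrix.replicateRow Unit v).rank ≤ (Matrix.replicateCol Unit u).rank :=
        Matrix.rank_mul_le_left _ _
    _ ≤ Fintype.card Unit := Matrix.rank_le_card_width _
    _ = 1 := rfl
lemma myrank_row_supported {a b : ℕ} (M : Matrix (Fin a) (Fin b) F) (r : Fin a)
    (h : ∀ a', a' ≠ r → M a' = 0) : M.rank ≤ 1 := by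
  have : M = Matrix.vecMulVec (Pi.single r 1) (M r) := by
    ext i j
    rw [Matrix.vecMulVec_apply, Pi.single_apply]
    by_cases hi : i = r
    · subst hi; simp
    · simp [hi, congrFun (h i hi) j]
  rw [this]
  exact (by
    rw [Matrix.vecMulVec_eq (ι := Unit)]
    calc (Matrix.replicateCol Unit _ * Matrix.replicateRow Unit (M r)).rank ≤ (Matrix.replicateCol Unit _).rank :=
          Matrix.rank_mul_le_left _ _
      _ ≤ Fintype.card Unit := Matrix.rank_le_card_width _
      _ = 1 := rfl)
lemma myrank_col_supported {a b : ℕ} (M : Matrix (Fin a) (Fin b) F) (c : Fin b)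
    (h : ∀ b', b' ≠ c → ∀ i, M i b' = 0) : M.rank ≤ 1 := by
  rw [← Matrix.rank_transpose]
  exact myrank_row_supported Mᵀ c (fun b' hb' => funext fun i => h b' hb' i)
lemma myrank_reindex {a b a' b' : ℕ} (e₁ : Fin a ≃ Fin a') (e₂ : Fin b ≃ Fin b')
    (M : Matrix (Fin a) (Fin b) F) : (Matrix.reindex e₁ e₂ M).rank = M.rank := by
  rw [Matrix.rank, Matrix.rank, Matrix.mulVecLin_reindex, LinearMap.range_comp,
    LinearMap.range_comp, LinearEquiv.range, Submodule.map_top, LinearEquiv.finrank_map_eq]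
lemma exists_full_rank {a b : ℕ} (h : b ≤ a) :
    ∃ M : Matrix (Fin a) (Fin b) F, M.rank = b := by
  refine ⟨Matrix.of (fun i j => if i = Fin.castLE h j then (1:F) else 0), ?_⟩
  set M : Matrix (Fin a) (Fin b) F := Matrix.of (fun i j => if i = Fin.castLE h j then (1:F) else 0)
  have hMM : Mᵀ * M = 1 := by
    ext j j'
    rw [Matrix.mul_apply]
    rw [Finset.sum_eq_single (Fin.castLE h j)]
    · simp only [Matrix.transpose_apply, M, Matrix.of_apply, if_pos rfl, one_mul]
      by_cases hj : j = j'
      · subst hj; simp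
      · have : Fin.castLE h j ≠ Fin.castLE h j' := fun hc => hj (Fin.castLE_injective h hc)
        simp [Matrix.one_apply, this, hj]
    · intro i _ hi
      simp [M, Matrix.transpose_apply, hi]
    · simp
  have h1 : (Mᵀ * M).rank = b := by rw [hMM]; simp
  have h2 : (Mᵀ * M).rank ≤ M.rank := Matrix.rank_mul_le_right _ _
  exact le_antisymm (Matrix.rank_le_width M) (le_trans h1.ge h2)

lemma myrank_stdBasisMatrix {a b : ℕ} (i : Fin a) (j : Fin b) {c : F} (hc : c ≠ 0) :
    (Matrix.single i j c).rank = 1 := by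
  refine le_antisymm ?_ (myrank_pos ?_)
  · refine myrank_row_supported _ i (fun a' ha' => ?_)
    funext j'
    exact Matrix.single_apply_of_ne _ _ _ _ _ (by tauto)
  · intro hzero
    have := congrFun (congrFun hzero i) j
    rw [Matrix.single_apply_same] at this
    exact hc (by simpa using this)

lemma transport_eq {ℓ : ℕ} (m n : Fin ℓ → ℕ)
    (y : ∀ j : Fin ℓ, Matrix (Fin (m j)) (Fin (n j)) F) {p q : Fin ℓ} (h : p = q) :
    Matrix.reindex (finCongr (congrArg m h)) (finCongr (congrArg n h)) (y p) = y q := by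
  subst h
  simp

end AuxIsometry

/-- **Classification of `𝔽_q`-linear isometries of `𝕄`.**  Every `𝔽_q`-linear sum-rank-weight
preserving map `φ : 𝕄 → 𝕄` is given by a permutation `σ` of the blocks (only permuting blocks
of equal sizes) followed by rank-preserving linear maps on each block. -/
theorem isometry_classification {F : Type*} [Field F] [Fintype F] {ℓ : ℕ}
    (m n : Fin ℓ → ℕ) (hℓ : 0 < ℓ) (hm : ∀ i j : Fin ℓ, i ≤ j → m j ≤ m i)
    (hmpos : ∀ i, 0 < m i) (hnm : ∀ i, n i ≤ m i) (hnpos : ∀ i, 0 < n i)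
    (φ : (∀ i : Fin ℓ, Matrix (Fin (m i)) (Fin (n i)) F) →ₗ[F]
      (∀ i : Fin ℓ, Matrix (Fin (m i)) (Fin (n i)) F))
    (hφ : ∀ C, srk (φ C) = srk C) :
    ∃ (σ : Equiv.Perm (Fin ℓ)) (hσm : ∀ i, m (σ i) = m i) (hσn : ∀ i, n (σ i) = n i)
      (ψ : ∀ i : Fin ℓ, Matrix (Fin (m i)) (Fin (n i)) F →ₗ[F] Matrix (Fin (m i)) (Fin (n i)) F),
      (∀ i M, (ψ i M).rank = M.rank) ∧
      (∀ C : ∀ i : Fin ℓ, Matrix (Fin (m i)) (Fin (n i)) F, ∀ i : Fin ℓ,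
        φ C i = ψ i (Matrix.reindex (finCongr (hσm i)) (finCongr (hσn i)) (C (σ i)))) := by
  classical
  -- φ is injective, hence surjective
  have hinj : Function.Injective φ := by
    rw [← LinearMap.ker_eq_bot, LinearMap.ker_eq_bot']
    intro x hx
    exact (srk_eq_zero_iff x).mp (by rw [← hφ x, hx, (srk_eq_zero_iff 0).mpr rfl])
  have hsurj : Function.Surjective φ := LinearMap.injective_iff_surjective.mp hinj
  -- the support map on blocks
  have key : ∀ i : Fin ℓ, ∃ k : Fin ℓ,
      ∀ M : Matrix (Fin (m i)) (Fin (n i)) F, ∀ j, j ≠ k → φ (Pi.single i M) j = 0 := by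
    intro i
    set L : Matrix (Fin (m i)) (Fin (n i)) F →ₗ[F]
        (∀ j : Fin ℓ, Matrix (Fin (m j)) (Fin (n j)) F) :=
      φ ∘ₗ LinearMap.single F (fun j : Fin ℓ => Matrix (Fin (m j)) (Fin (n j)) F) i with hL
    have hLsrk : ∀ M, srk (L M) = M.rank := by
      intro M
      rw [hL, LinearMap.comp_apply]
      rw [show (LinearMap.single F (fun j : Fin ℓ => Matrix (Fin (m j)) (Fin (n j)) F) i M) = Pi.single i M from rfl, hφ, srk_single]
    have hsupp : ∀ M : Matrix (Fin (m i)) (Fin (n i)) F, M.rank = 1 →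
        ∃ k, L M k ≠ 0 ∧ ∀ j ≠ k, L M j = 0 := by
      intro M hM
      exact supp_of_srk_one _ (by rw [hLsrk, hM])
    have hstep : ∀ A B : Matrix (Fin (m i)) (Fin (n i)) F, (A - B).rank ≤ 1 →
        ∀ p q, L A p ≠ 0 → (∀ j ≠ p, L A j = 0) → L B q ≠ 0 → (∀ j ≠ q, L B j = 0) → p = q := by
      intro A B hAB p q h1 h2 h3 h4
      refine adj_same_block (L A) (L B) p q h1 h2 h3 h4 ?_
      rw [← map_sub L, hLsrk]
      exact hAB
    obtain ⟨z0, hz0⟩ : ∃ z : Fin (m i), True := ⟨⟨0, hmpos i⟩, trivial⟩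
    obtain ⟨w0, hw0⟩ : ∃ w : Fin (n i), True := ⟨⟨0, hnpos i⟩, trivial⟩
    obtain ⟨k, hk1, hk2⟩ := hsupp (Matrix.single z0 w0 (1:F))
      (myrank_stdBasisMatrix _ _ one_ne_zero)
    refine ⟨k, ?_⟩
    -- first: all nonzero standard basis matrices go to block k
    have hstd : ∀ (a : Fin (m i)) (b : Fin (n i)) (c : F), c ≠ 0 →
        ∀ j, j ≠ k → L (Matrix.single a b c) j = 0 := by
      intro a b c hc
      -- path: std z0 w0 1 ~ std a w0 c ~ std a b c
      obtain ⟨k1, hk11, hk12⟩ := hsupp (Matrix.single a w0 c) (myrank_stdBasisMatrix _ _ hc)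
      obtain ⟨k2, hk21, hk22⟩ := hsupp (Matrix.single a b c) (myrank_stdBasisMatrix _ _ hc)
      have e1 : k = k1 := by
        refine hstep _ _ ?_ k k1 hk1 hk2 hk11 hk12
        refine myrank_col_supported _ w0 (fun b' hb' i' => ?_)
        simp only [Matrix.sub_apply]
        rw [Matrix.single_apply_of_ne _ _ _ _ _ (by tauto),
          Matrix.single_apply_of_ne _ _ _ _ _ (by tauto), sub_zero]
      have e2 : k1 = k2 := by
        refine hstep _ _ ?_ k1 k2 hk11 hk12 hk21 hk22
        refine myrank_row_supported _ a (fun a' ha' => ?_)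
        funext j'
        simp only [Matrix.sub_apply]
        rw [Matrix.single_apply_of_ne _ _ _ _ _ (by tauto),
          Matrix.single_apply_of_ne _ _ _ _ _ (by tauto), sub_zero]
        rfl
      intro j hj
      exact hk22 j (by rw [← e2, ← e1]; exact hj)
    -- now extend to all matrices by linearity
    intro M j hj
    have hM : M = ∑ a : Fin (m i), ∑ b : Fin (n i), Matrix.single a b (M a b) :=
      Matrix.matrix_eq_sum_single M
    have : L M = ∑ a : Fin (m i), ∑ b : Fin (n i), L (Matrix.single a b (M a b)) := by
      conv_lhs => rw [hM]
      rw [map_sum]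
      exact Finset.sum_congr rfl (fun a _ => map_sum L _ _)
    rw [show φ (Pi.single i M) = L M from rfl, this]
    simp only [Finset.sum_apply]
    refine Finset.sum_eq_zero (fun a _ => Finset.sum_eq_zero (fun b _ => ?_))
    by_cases hc : M a b = 0
    · rw [hc, Matrix.single_zero, map_zero]
      rfl
    · exact hstd a b (M a b) hc j hj
  choose k hk using key
  -- k is surjective, hence bijective
  have hksurj : Function.Surjective k := by
    intro j
    by_contra hc
    push_neg at hc
    obtain ⟨x, hx⟩ := hsurj (Pi.single j (Matrix.single ⟨0, hmpos j⟩ ⟨0, hnpos j⟩ (1:F)))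
    have h1 : φ x j = ∑ i', φ (Pi.single i' (x i')) j := by
      conv_lhs => rw [(Finset.univ_sum_single x).symm, map_sum]
      rw [Finset.sum_apply]
    have h2 : φ x j = 0 := by
      rw [h1]
      exact Finset.sum_eq_zero (fun i' _ => hk i' (x i') j (Ne.symm (hc i')))
    rw [hx, Pi.single_eq_same] at h2
    have := myrank_stdBasisMatrix (F := F) (⟨0, hmpos j⟩ : Fin (m j)) (⟨0, hnpos j⟩ : Fin (n j))
      (one_ne_zero)
    rw [h2, Matrix.rank_zero] at this
    exact one_ne_zero this.symm
  have hkinj : Function.Injective k := Finite.injective_iff_surjective.mpr hksurj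
  -- the blockwise maps
  set ψ' : ∀ i : Fin ℓ, Matrix (Fin (m i)) (Fin (n i)) F →ₗ[F]
      Matrix (Fin (m (k i))) (Fin (n (k i))) F :=
    fun i => (LinearMap.proj (k i)) ∘ₗ φ ∘ₗ
      LinearMap.single F (fun j : Fin ℓ => Matrix (Fin (m j)) (Fin (n j)) F) i with hψ'def
  have hψ'eq : ∀ i M, ψ' i M = φ (Pi.single i M) (k i) := fun i M => rfl
  have hψ'rank : ∀ i M, (ψ' i M).rank = M.rank := by
    intro i M
    have h1 : srk (φ (Pi.single i M)) = M.rank := by rw [hφ, srk_single]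
    have h2 : srk (φ (Pi.single i M)) = (φ (Pi.single i M) (k i)).rank := by
      unfold srk
      rw [Finset.sum_eq_single (k i)]
      · intro j _ hj; rw [hk i M j hj, Matrix.rank_zero]
      · simp
    rw [hψ'eq, ← h2, h1]
  have hψ'surj : ∀ i, Function.Surjective (ψ' i) := by
    intro i N
    obtain ⟨x, hx⟩ := hsurj (Pi.single (k i) N)
    refine ⟨x i, ?_⟩
    have h1 : φ x (k i) = ∑ i', φ (Pi.single i' (x i')) (k i) := by
      conv_lhs => rw [(Finset.univ_sum_single x).symm, map_sum]
      rw [Finset.sum_apply]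
    have h2 : φ x (k i) = φ (Pi.single i (x i)) (k i) := by
      rw [h1]
      refine Finset.sum_eq_single i
        (fun i' _ hi' => hk i' (x i') (k i) (fun hce => hi' (hkinj hce.symm))) (by simp)
    rw [hψ'eq, ← h2, hx, Pi.single_eq_same]
  -- block sizes are preserved
  have hnk : ∀ i, n (k i) = n i := by
    intro i
    refine le_antisymm ?_ ?_
    · obtain ⟨N, hN⟩ := exists_full_rank (F := F) (hnm (k i))
      obtain ⟨M, hM⟩ := hψ'surj i N
      have hr : M.rank = n (k i) := by rw [← hψ'rank i M, hM, hN]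
      rw [← hr]; exact Matrix.rank_le_width M
    · obtain ⟨M, hM⟩ := exists_full_rank (F := F) (hnm i)
      have hr : (ψ' i M).rank = n i := by rw [hψ'rank, hM]
      rw [← hr]; exact Matrix.rank_le_width _
  have hmk : ∀ i, m (k i) = m i := by
    intro i
    have hinj' : Function.Injective (ψ' i) := by
      rw [← LinearMap.ker_eq_bot, LinearMap.ker_eq_bot']
      intro M hM
      exact (myrank_eq_zero_iff M).mp (by rw [← hψ'rank i M, hM, Matrix.rank_zero])
    have heq := LinearEquiv.finrank_eq (LinearEquiv.ofBijective (ψ' i) ⟨hinj', hψ'surj i⟩)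
    rw [Module.finrank_matrix, Module.finrank_matrix, Fintype.card_fin, Fintype.card_fin,
      Fintype.card_fin, Fintype.card_fin, hnk i] at heq
    simp only [Module.finrank_self, mul_one] at heq
    exact (Nat.eq_of_mul_eq_mul_right (hnpos i) heq.symm)
  -- assemble the permutation
  set e : Equiv.Perm (Fin ℓ) := Equiv.ofBijective k ⟨hkinj, hksurj⟩ with hedef
  set σ : Equiv.Perm (Fin ℓ) := e.symm with hσdef
  have he : ∀ i, k (σ i) = i := fun i => e.apply_symm_apply i
  have hσm : ∀ i, m (σ i) = m i := fun i => by rw [← hmk (σ i), he i]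
  have hσn : ∀ i, n (σ i) = n i := fun i => by rw [← hnk (σ i), he i]
  refine ⟨σ, hσm, hσn, fun i =>
    ((Matrix.reindexLinearEquiv F F (finCongr (congrArg m (he i)))
        (finCongr (congrArg n (he i)))).toLinearMap ∘ₗ ψ' (σ i)) ∘ₗ
      (Matrix.reindexLinearEquiv F F (finCongr (hσm i).symm)
        (finCongr (hσn i).symm)).toLinearMap, ?_, ?_⟩
  · intro i M
    simp only [LinearMap.comp_apply, LinearEquiv.coe_coe, Matrix.reindexLinearEquiv_apply]
    rw [myrank_reindex, hψ'rank, myrank_reindex]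
  · intro C i
    simp only [LinearMap.comp_apply, LinearEquiv.coe_coe, Matrix.reindexLinearEquiv_apply]
    have hcancel : Matrix.reindex (finCongr (hσm i).symm) (finCongr (hσn i).symm)
        (Matrix.reindex (finCongr (hσm i)) (finCongr (hσn i)) (C (σ i))) = C (σ i) := by
      rw [show finCongr (hσm i).symm = (finCongr (hσm i)).symm from rfl,
        show finCongr (hσn i).symm = (finCongr (hσn i)).symm from rfl,
        ← Matrix.reindex_symm, Equiv.symm_apply_apply]
    rw [hcancel, hψ'eq]
    have h3 : φ C i = φ (Pi.single (σ i) (C (σ i))) i := by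
      have h1 : φ C i = ∑ i', φ (Pi.single i' (C i')) i := by
        conv_lhs => rw [(Finset.univ_sum_single C).symm, map_sum]
        rw [Finset.sum_apply]
      rw [h1]
      refine Finset.sum_eq_single (σ i) (fun i' _ hi' => hk i' (C i') i ?_) (by simp)
      intro hce
      have hce2 : k i' = k (σ i) := by rw [he i]; exact hce.symm
      exact hi' (hkinj hce2)
    rw [h3]
    exact (transport_eq (fun j => m j) (fun j => n j) (φ (Pi.single (σ i) (C (σ i)))) (he i)).symm
end

section
/- (Puncturing of MSRD codes) Suppose there exists an MSRD code 𝒞 ⊆ 𝕄 with d(𝒞) = Σ_{i=1}^{j−1} n_i + δ + 1 and dim(𝒞) = Σ_{i=j}^{ℓ} m_i n_i − δ m_j, for some j ∈ {1,…,ℓ} and 0 ≤ δ ≤ n_j − 1; write d = d(𝒞). Choose s ∈ {1,…,j} if δ > 0, and s ∈ {1,…,j−1} if δ = 0. Setting ñ_i = n_i for i ≠ s and ñ_s = n_s − 1, there exists an MSRD code with minimum sum-rank distance d − 1 in 𝕄̃ = 𝔽_q^{m_1×ñ_1} × … × 𝔽_q^{m_ℓ×ñ_ℓ}. -/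
open Matrix Finset

open Module

section AuxPunct

lemma submatrix_transpose_comp' {K : Type*} [Field K] {p q k : ℕ}
    (A : Matrix (Fin p) (Fin q) K) (e : Fin k → Fin q) :
    (A.submatrix id e)ᵀ = Aᵀ ∘ e := rfl

lemma rank_submatrix_id_of_surj {K : Type*} [Field K] {p q k : ℕ}
    (A : Matrix (Fin p) (Fin q) K) (e : Fin k → Fin q) (he : Function.Surjective e) :
    (A.submatrix id e).rank = A.rank := by
  rw [Matrix.rank_eq_finrank_span_cols, Matrix.rank_eq_finrank_span_cols]
  unfold Matrix.col
  rw [submatrix_transpose_comp', Set.range_comp (f := e) (g := (Aᵀ : Fin q → Fin p → K)), he.range_eq, Set.image_univ (f := (Aᵀ : Fin q → Fin p → K))]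

lemma eq_zero_of_submatrix_eq_zero {K : Type*} [Field K] {p q k : ℕ}
    (A : Matrix (Fin p) (Fin q) K) (e : Fin k → Fin q) (he : Function.Surjective e)
    (h : A.submatrix id e = 0) : A = 0 := by
  funext r c
  obtain ⟨c', rfl⟩ := he c
  exact congrFun (congrFun h r) c'

lemma castLE_surj_of_le {a b : ℕ} (h : a ≤ b) (h' : b ≤ a) :
    Function.Surjective (Fin.castLE h) := fun y => ⟨⟨y.1, lt_of_lt_of_le y.2 h'⟩, rfl⟩

lemma rank_le_submatrix_castLE_add {K : Type*} [Field K] {p q k : ℕ}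
    (A : Matrix (Fin p) (Fin q) K) (h : k ≤ q) :
    A.rank ≤ (A.submatrix id (Fin.castLE h)).rank + (q - k) := by
  classical
  rw [Matrix.rank_eq_finrank_span_cols, Matrix.rank_eq_finrank_span_cols]
  unfold Matrix.col
  rw [submatrix_transpose_comp']
  set g : Fin (q - k) → Fin q := fun a => ⟨k + a.1, by omega⟩ with hg
  have hcover : Set.range Aᵀ ⊆
      Set.range (Aᵀ ∘ Fin.castLE h) ∪ Set.range (Aᵀ ∘ g) := by
    rintro _ ⟨i, rfl⟩
    by_cases hik : (i : ℕ) < k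
    · exact Or.inl ⟨⟨i, hik⟩, rfl⟩
    · have hgi : g ⟨i.1 - k, by omega⟩ = i := by
        apply Fin.ext
        show k + (i.1 - k) = i.1
        omega
      exact Or.inr ⟨⟨i.1 - k, by omega⟩, congrArg (fun c => Aᵀ c) hgi⟩
  have hspan : Submodule.span K (Set.range Aᵀ) ≤
      Submodule.span K (Set.range (Aᵀ ∘ Fin.castLE h)) ⊔ Submodule.span K (Set.range (Aᵀ ∘ g)) := by
    rw [← Submodule.span_union]; exact Submodule.span_mono hcover
  have h1 : finrank K (Submodule.span K (Set.range Aᵀ)) ≤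
      finrank K ((Submodule.span K (Set.range (Aᵀ ∘ Fin.castLE h))) ⊔
        (Submodule.span K (Set.range (Aᵀ ∘ g))) : Submodule K (Fin p → K)) :=
    Submodule.finrank_mono hspan
  have h2 := Submodule.finrank_add_le_finrank_add_finrank
    (Submodule.span K (Set.range (Aᵀ ∘ Fin.castLE h))) (Submodule.span K (Set.range (Aᵀ ∘ g)))
  have h3 : finrank K (Submodule.span K (Set.range (Aᵀ ∘ g))) ≤ q - k := by
    refine le_trans (finrank_span_le_card _) ?_
    rw [Set.toFinset_range]
    exact (Finset.card_image_le).trans (by simp)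
  omega

/-- Column projection on each block. -/
noncomputable def colProj (K : Type*) [Field K] {ℓ : ℕ} {m : Fin ℓ → ℕ} (n n' : Fin ℓ → ℕ)
    (h : ∀ i, n' i ≤ n i) :
    (∀ i, Matrix (Fin (m i)) (Fin (n i)) K) →ₗ[K] (∀ i, Matrix (Fin (m i)) (Fin (n' i)) K) where
  toFun C i := (C i).submatrix id (Fin.castLE (h i))
  map_add' _ _ := rfl
  map_smul' _ _ := rfl

@[simp] lemma colProj_apply (K : Type*) [Field K] {ℓ : ℕ} {m : Fin ℓ → ℕ} (n n' : Fin ℓ → ℕ)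
    (h : ∀ i, n' i ≤ n i) (C : ∀ i, Matrix (Fin (m i)) (Fin (n i)) K) (i : Fin ℓ) :
    colProj K n n' h C i = (C i).submatrix id (Fin.castLE (h i)) := rfl

lemma finrank_map_of_ker {K V W : Type*} [Field K] [AddCommGroup V] [Module K V]
    [AddCommGroup W] [Module K W] [FiniteDimensional K V]
    (f : V →ₗ[K] W) (p : Submodule K V) (h : ∀ x ∈ p, f x = 0 → x = 0) :
    finrank K (p.map f) = finrank K p := by
  rw [← LinearMap.range_domRestrict]
  refine LinearMap.finrank_range_of_inj ?_
  intro x y hxy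
  have hxy' : f ((x : V) - (y : V)) = 0 := by
    rw [map_sub, sub_eq_zero]
    simpa using hxy
  have h0 := h ((x : V) - (y : V)) (p.sub_mem x.2 y.2) hxy'
  exact Subtype.ext (by rwa [sub_eq_zero] at h0)

lemma sum_split_at {ℓ : ℕ} (j : Fin ℓ) (f : Fin ℓ → ℕ) :
    ∑ i, f i = ∑ i ∈ Finset.Iio j, f i + f j + ∑ i ∈ Finset.Ioi j, f i := by
  have h1 : (univ : Finset (Fin ℓ)) = Finset.Iio j ∪ Finset.Ici j := by
    ext x; simp [lt_or_ge]
  have h2 : Disjoint (Finset.Iio j) (Finset.Ici j) := by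
    simp only [Finset.disjoint_left, Finset.mem_Iio, Finset.mem_Ici]
    intro a ha hb; omega
  rw [h1, Finset.sum_union h2, ← Finset.Ioi_insert,
    Finset.sum_insert (by simp), add_assoc]

end AuxPunct

/-- **Puncturing of MSRD codes.**  If there exists an MSRD code in `𝕄` with parameters `j, δ`
and minimum distance `d`, then for any `s ≤ j` (with `s < j` required when `δ = 0`),
decreasing `n s` by one yields an ambient space containing an MSRD code with minimum
sum-rank distance `d - 1`. -/
theorem msrd_puncturing {F : Type*} [Field F] [Fintype F] {ℓ : ℕ}
    (m n : Fin ℓ → ℕ) (hℓ : 0 < ℓ) (hm : ∀ i j : Fin ℓ, i ≤ j → m j ≤ m i)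
    (hmpos : ∀ i, 0 < m i) (hnm : ∀ i, n i ≤ m i) (hnpos : ∀ i, 0 < n i)
    (𝒞 : Submodule F (∀ i : Fin ℓ, Matrix (Fin (m i)) (Fin (n i)) F))
    (hMSRD : IsMSRD 𝒞) (j : Fin ℓ) (δ : ℕ) (hδ : δ ≤ n j - 1)
    (hd : dmin 𝒞 = ∑ i ∈ Finset.Iio j, n i + δ + 1)
    (hdim : Module.finrank F 𝒞 = ∑ i ∈ Finset.Ici j, m i * n i - δ * m j)
    (s : Fin ℓ) (hs : if 0 < δ then s ≤ j else s < j) :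
    ∃ 𝒞' : Submodule F
        (∀ i : Fin ℓ, Matrix (Fin (m i)) (Fin (Function.update n s (n s - 1) i)) F),
      IsMSRD 𝒞' ∧ dmin 𝒞' = dmin 𝒞 - 1 := by
  classical
  have hsj : s ≤ j := by
    by_cases h0 : 0 < δ
    · rw [if_pos h0] at hs; exact hs
    · rw [if_neg h0] at hs; exact le_of_lt hs
  have hδ1 : δ + 1 ≤ n j := by have := hnpos j; omega
  set nn := Function.update n s (n s - 1) with hnndef
  have hnneq : ∀ i : Fin ℓ, i ≠ s → nn i = n i := fun i hi => Function.update_of_ne hi _ _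
  have hnns : nn s = n s - 1 := Function.update_self _ _ _
  have hnnle : ∀ i, nn i ≤ n i := by
    intro i
    by_cases hi : i = s
    · subst hi; rw [hnns]; omega
    · rw [hnneq i hi]
  have hnnj1 : n j - 1 ≤ nn j := by
    by_cases hjs : j = s
    · subst hjs; rw [hnns]
    · rw [hnneq j hjs]; omega
  -- the minimum distance is at least 2
  have hd2 : 2 ≤ dmin 𝒞 := by
    rw [hd]
    rcases Nat.eq_zero_or_pos δ with h0 | h0
    · have hslt : s < j := by rw [if_neg (by omega)] at hs; exact hs
      have hpos : 0 < ∑ i ∈ Finset.Iio j, n i :=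
        Finset.sum_pos' (fun i _ => Nat.zero_le _) ⟨s, Finset.mem_Iio.mpr hslt, hnpos s⟩
      omega
    · omega
  set π := colProj F n nn hnnle with hπdef
  -- π is injective on 𝒞
  have hker : ∀ C ∈ 𝒞, π C = 0 → C = 0 := by
    intro C hC hC0
    by_contra hCne
    have hle : dmin 𝒞 ≤ srk C := Nat.sInf_le ⟨C, hC, hCne, rfl⟩
    have hzero : ∀ i ∈ univ.erase s, (C i).rank = 0 := by
      intro i hi
      have hi' := Finset.ne_of_mem_erase hi
      have hsurj : Function.Surjective (Fin.castLE (hnnle i)) :=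
        castLE_surj_of_le _ (hnneq i hi').ge
      have hCi : C i = 0 := eq_zero_of_submatrix_eq_zero _ _ hsurj (congrFun hC0 i)
      rw [hCi, Matrix.rank_zero]
    have hrs : (C s).rank ≤ 1 := by
      have h1 := rank_le_submatrix_castLE_add (C s) (hnnle s)
      have h0 : ((C s).submatrix id (Fin.castLE (hnnle s))).rank = 0 := by
        rw [show (C s).submatrix id (Fin.castLE (hnnle s)) = 0 from congrFun hC0 s,
          Matrix.rank_zero]
      have hns : n s - nn s ≤ 1 := by rw [hnns]; omega
      omega
    have hsrk : srk C ≤ 1 := by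
      have e1 : srk C = (C s).rank + ∑ i ∈ univ.erase s, (C i).rank :=
        (Finset.add_sum_erase univ (fun i => (C i).rank) (mem_univ s)).symm
      have e2 : ∑ i ∈ univ.erase s, (C i).rank = 0 := Finset.sum_eq_zero hzero
      omega
    omega
  have hfr : finrank F (𝒞.map π) = finrank F 𝒞 := finrank_map_of_ker π 𝒞 hker
  -- dimension of 𝒞 is positive
  have hmjsum : m j * (δ + 1) ≤ ∑ i ∈ Finset.Ici j, m i * n i := by
    have h1 : m j * (δ + 1) ≤ m j * n j := Nat.mul_le_mul_left _ hδ1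
    have h2 : m j * n j ≤ ∑ i ∈ Finset.Ici j, m i * n i :=
      Finset.single_le_sum (f := fun i => m i * n i) (fun i _ => Nat.zero_le _)
        (Finset.mem_Ici.mpr le_rfl)
    omega
  have hmj1 : m j * (δ + 1) = m j * δ + m j := by ring
  have hmj2 : δ * m j = m j * δ := mul_comm _ _
  have hdimpos : 0 < finrank F 𝒞 := by
    rw [hdim]
    have := hmpos j
    omega
  have hne : 𝒞.map π ≠ ⊥ := by
    intro hbot
    rw [hbot, finrank_bot] at hfr
    omega
  -- weights of nonzero codewords of the punctured code
  have hlow : ∀ D ∈ 𝒞.map π, D ≠ 0 → dmin 𝒞 - 1 ≤ srk D := by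
    rintro D hD hDne
    obtain ⟨C, hC, rfl⟩ := hD
    have hCne : C ≠ 0 := by rintro rfl; exact hDne (map_zero π)
    have h1 : dmin 𝒞 ≤ srk C := Nat.sInf_le ⟨C, hC, hCne, rfl⟩
    have e1 : srk C = (C s).rank + ∑ i ∈ univ.erase s, (C i).rank :=
      (Finset.add_sum_erase univ (fun i => (C i).rank) (mem_univ s)).symm
    have e2 : srk (π C) = ((π C) s).rank + ∑ i ∈ univ.erase s, ((π C) i).rank :=
      (Finset.add_sum_erase univ (fun i => ((π C) i).rank) (mem_univ s)).symm
    have e3 : ∑ i ∈ univ.erase s, ((π C) i).rank = ∑ i ∈ univ.erase s, (C i).rank := by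
      refine Finset.sum_congr rfl fun i hi => ?_
      have hi' := Finset.ne_of_mem_erase hi
      exact rank_submatrix_id_of_surj _ _ (castLE_surj_of_le _ (hnneq i hi').ge)
    have e4 : (C s).rank ≤ ((π C) s).rank + 1 := by
      have h4 := rank_le_submatrix_castLE_add (C s) (hnnle s)
      have hns : n s - nn s ≤ 1 := by rw [hnns]; omega
      have : ((π C) s).rank = ((C s).submatrix id (Fin.castLE (hnnle s))).rank := rfl
      omega
    omega
  -- dmin of the punctured code is attained
  obtain ⟨D₀, hD₀mem, hD₀ne⟩ := Submodule.exists_mem_ne_zero_of_ne_bot hne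
  have hSne : Set.Nonempty {w | ∃ D ∈ 𝒞.map π, D ≠ 0 ∧ srk D = w} :=
    ⟨srk D₀, D₀, hD₀mem, hD₀ne, rfl⟩
  obtain ⟨D₁, hD₁, hD₁ne, hD₁srk⟩ := Nat.sInf_mem hSne
  have hge : dmin 𝒞 - 1 ≤ dmin (𝒞.map π) := le_trans (hlow D₁ hD₁ hD₁ne) (le_of_eq hD₁srk)
  -- upper bound : dmin (𝒞.map π) ≤ dmin 𝒞 - 1, by the Singleton-type argument
  have hub : dmin (𝒞.map π) ≤ dmin 𝒞 - 1 := by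
    by_contra hcon
    push_neg at hcon
    set t : Fin ℓ → ℕ := fun i => if i < j then 0 else if i = j then n j - (δ + 1) else nn i
      with htdef
    have htj : t j = n j - (δ + 1) := by simp [htdef]
    have htle : ∀ i, t i ≤ nn i := by
      intro i
      rcases lt_trichotomy i j with h | h | h
      · simp [htdef, h]
      · subst h; rw [htj]; omega
      · have h1 : ¬ i < j := by omega
        have h2 : i ≠ j := by omega
        simp [htdef, h1, h2]
    set ρ := colProj F nn t htle with hρdef
    have hker2 : ∀ D ∈ 𝒞.map π, ρ D = 0 → D = 0 := by
      intro D hD hD0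
      by_contra hDne
      have h1 : dmin (𝒞.map π) ≤ srk D := Nat.sInf_le ⟨D, hD, hDne, rfl⟩
      have hbound : ∀ i : Fin ℓ, (D i).rank ≤ nn i - t i := by
        intro i
        have h4 := rank_le_submatrix_castLE_add (D i) (htle i)
        have h0 : ((D i).submatrix id (Fin.castLE (htle i))).rank = 0 := by
          rw [show (D i).submatrix id (Fin.castLE (htle i)) = 0 from congrFun hD0 i,
            Matrix.rank_zero]
        omega
      have hsle : srk D ≤ ∑ i, (nn i - t i) :=
        Finset.sum_le_sum (fun i _ => hbound i)
      have hsplit := sum_split_at j (fun i => nn i - t i)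
      have hIoi0 : ∑ i ∈ Finset.Ioi j, (nn i - t i) = 0 := by
        refine Finset.sum_eq_zero fun i hi => ?_
        have hij : j < i := Finset.mem_Ioi.mp hi
        have h1 : ¬ i < j := by omega
        have h2 : i ≠ j := by omega
        simp [htdef, h1, h2]
      have hIio : ∑ i ∈ Finset.Iio j, (nn i - t i) = ∑ i ∈ Finset.Iio j, nn i := by
        refine Finset.sum_congr rfl fun i hi => ?_
        have hij : i < j := Finset.mem_Iio.mp hi
        simp [htdef, hij]
      -- compute ∑ i ∈ Iio j, nn i
      have hIion : ∑ i ∈ Finset.Iio j, nn i + (if s < j then 1 else 0)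
          = ∑ i ∈ Finset.Iio j, n i := by
        by_cases hcase : s < j
        · rw [if_pos hcase]
          have hmem : s ∈ Finset.Iio j := Finset.mem_Iio.mpr hcase
          have a1 : nn s + ∑ i ∈ (Finset.Iio j).erase s, nn i = ∑ i ∈ Finset.Iio j, nn i :=
            Finset.add_sum_erase _ _ hmem
          have a2 : n s + ∑ i ∈ (Finset.Iio j).erase s, n i = ∑ i ∈ Finset.Iio j, n i :=
            Finset.add_sum_erase _ _ hmem
          have a3 : ∑ i ∈ (Finset.Iio j).erase s, nn i = ∑ i ∈ (Finset.Iio j).erase s, n i :=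
            Finset.sum_congr rfl fun i hi => hnneq i (Finset.ne_of_mem_erase hi)
          have a4 := hnpos s
          rw [hnns] at a1
          omega
        · rw [if_neg hcase]
          have : ∑ i ∈ Finset.Iio j, nn i = ∑ i ∈ Finset.Iio j, n i := by
            refine Finset.sum_congr rfl fun i hi => hnneq i ?_
            have := Finset.mem_Iio.mp hi
            intro h; subst h; exact hcase this
          omega
      have h2 : srk D ≤ dmin 𝒞 - 1 := by
        rw [hd]
        have hnnjval : nn j - t j ≤ δ + (if s < j then 1 else 0) := by
          by_cases hcase : s < j
          · have : nn j = n j := hnneq j (by omega)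
            rw [if_pos hcase, this, htj]; omega
          · have hcase' : s = j := by omega
            have : nn j = n j - 1 := by rw [← hcase', hnns]
            rw [if_neg hcase, this, htj]; omega
        omega
      omega
    have hle2 : finrank F (𝒞.map π) ≤ finrank F (∀ i, Matrix (Fin (m i)) (Fin (t i)) F) := by
      rw [← finrank_map_of_ker ρ _ hker2]
      exact Submodule.finrank_le _
    have hcod : finrank F (∀ i, Matrix (Fin (m i)) (Fin (t i)) F) = ∑ i, m i * t i := by
      rw [Module.finrank_pi_fintype]
      exact Finset.sum_congr rfl fun i _ => by
        rw [Module.finrank_matrix]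
        simp
    -- compute ∑ i, m i * t i
    have hsplit := sum_split_at j (fun i => m i * t i)
    have hIio0 : ∑ i ∈ Finset.Iio j, m i * t i = 0 := by
      refine Finset.sum_eq_zero fun i hi => ?_
      have hij : i < j := Finset.mem_Iio.mp hi
      simp [htdef, hij]
    have hIoi : ∑ i ∈ Finset.Ioi j, m i * t i = ∑ i ∈ Finset.Ioi j, m i * n i := by
      refine Finset.sum_congr rfl fun i hi => ?_
      have hij : j < i := Finset.mem_Ioi.mp hi
      have h1 : ¬ i < j := by omega
      have h2 : i ≠ j := by omega
      have h3 : i ≠ s := by omega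
      simp [htdef, h1, h2, hnneq i h3]
    have hIci : ∑ i ∈ Finset.Ici j, m i * n i = m j * n j + ∑ i ∈ Finset.Ioi j, m i * n i := by
      rw [← Finset.Ioi_insert, Finset.sum_insert (by simp)]
    have hmjtj : m j * t j + m j * (δ + 1) = m j * n j := by
      rw [htj, ← Nat.mul_add]
      congr 1
      omega
    -- the contradiction
    have hfinal : finrank F (𝒞.map π) ≤ ∑ i ∈ Finset.Ici j, m i * n i - m j * (δ + 1) := by
      rw [← hcod] at *
      omega
    rw [hfr, hdim] at hfinal
    have := hmpos j
    omega
  have hdmin : dmin (𝒞.map π) = dmin 𝒞 - 1 := le_antisymm hub hge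
  refine ⟨𝒞.map π, ?_, hdmin⟩
  -- the punctured code is MSRD
  rcases lt_or_eq_of_le hsj with hslt | hseq
  · -- case s < j : parameters (j, δ)
    refine ⟨j, δ, ?_, ?_, ?_⟩
    · show δ ≤ nn j - 1
      rw [hnneq j (by omega)]; exact hδ
    · show dmin (Submodule.map π 𝒞) = ∑ i ∈ Finset.Iio j, nn i + δ + 1
      have hmem : s ∈ Finset.Iio j := Finset.mem_Iio.mpr hslt
      have a1 : nn s + ∑ i ∈ (Finset.Iio j).erase s, nn i = ∑ i ∈ Finset.Iio j, nn i :=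
        Finset.add_sum_erase _ _ hmem
      have a2 : n s + ∑ i ∈ (Finset.Iio j).erase s, n i = ∑ i ∈ Finset.Iio j, n i :=
        Finset.add_sum_erase _ _ hmem
      have a3 : ∑ i ∈ (Finset.Iio j).erase s, nn i = ∑ i ∈ (Finset.Iio j).erase s, n i :=
        Finset.sum_congr rfl fun i hi => hnneq i (Finset.ne_of_mem_erase hi)
      have a4 := hnpos s
      rw [hnns] at a1
      rw [hdmin, hd]
      omega
    · show finrank F ↥(Submodule.map π 𝒞) = ∑ i ∈ Finset.Ici j, m i * nn i - δ * m j
      have a5 : ∑ i ∈ Finset.Ici j, m i * nn i = ∑ i ∈ Finset.Ici j, m i * n i := by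
        refine Finset.sum_congr rfl fun i hi => ?_
        have := Finset.mem_Ici.mp hi
        rw [hnneq i (by omega)]
      rw [hfr, hdim, a5]
  · -- case s = j : parameters (j, δ - 1), with δ ≥ 1
    have hδpos : 0 < δ := by
      by_contra h0
      rw [if_neg h0] at hs
      omega
    refine ⟨j, δ - 1, ?_, ?_, ?_⟩
    · show δ - 1 ≤ nn j - 1
      have e : nn j = n j - 1 := by rw [← hseq]; exact hnns
      rw [e]; omega
    · show dmin (Submodule.map π 𝒞) = ∑ i ∈ Finset.Iio j, nn i + (δ - 1) + 1
      have a1 : ∑ i ∈ Finset.Iio j, nn i = ∑ i ∈ Finset.Iio j, n i := by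
        refine Finset.sum_congr rfl fun i hi => hnneq i ?_
        have := Finset.mem_Iio.mp hi
        omega
      rw [hdmin, hd, a1]
      omega
    · show finrank F ↥(Submodule.map π 𝒞) = ∑ i ∈ Finset.Ici j, m i * nn i - (δ - 1) * m j
      have hmem : j ∈ Finset.Ici j := Finset.mem_Ici.mpr le_rfl
      have a1 : m j * nn j + ∑ i ∈ (Finset.Ici j).erase j, m i * nn i
          = ∑ i ∈ Finset.Ici j, m i * nn i :=
        Finset.add_sum_erase _ (fun i => m i * nn i) hmem
      have a2 : m j * n j + ∑ i ∈ (Finset.Ici j).erase j, m i * n i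
          = ∑ i ∈ Finset.Ici j, m i * n i :=
        Finset.add_sum_erase _ (fun i => m i * n i) hmem
      have a3 : ∑ i ∈ (Finset.Ici j).erase j, m i * nn i
          = ∑ i ∈ (Finset.Ici j).erase j, m i * n i := by
        refine Finset.sum_congr rfl fun i hi => ?_
        rw [hnneq i (by rw [← hseq] at hi; exact Finset.ne_of_mem_erase hi)]
      have a4 : m j * nn j + m j = m j * n j := by
        have e : nn j = n j - 1 := by rw [← hseq]; exact hnns
        have h1 : (n j - 1) + 1 = n j := by have := hnpos j; omega
        calc m j * nn j + m j = m j * ((n j - 1) + 1) := by rw [e]; ring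
          _ = m j * n j := by rw [h1]
      have a5 : (δ - 1) * m j + m j = δ * m j := by
        have e : δ - 1 + 1 = δ := by omega
        calc (δ - 1) * m j + m j = (δ - 1 + 1) * m j := by ring
          _ = δ * m j := by rw [e]
      rw [hfr, hdim]
      omega
end

section
/- (Roots of skew polynomials) Let a_1, …, a_ℓ ∈ 𝔽_{q^m}^* be such that N(a_i) ≠ N(a_j) whenever i ≠ j, where N = N_{𝔽_{q^m}/𝔽_q} is the field norm. Let d ≥ 0 and f_0, f_1, …, f_d ∈ 𝔽_{q^m} with f_d ≠ 0, and for a ∈ 𝔽_{q^m}^* let f_a : 𝔽_{q^m} → 𝔽_{q^m} be the 𝔽_q-linear map defined by f_a(β) = Σ_{j=0}^{d} f_j β^{q^j} a^{(q^j−1)/(q−1)}. Then Σ_{i=1}^{ℓ} dim_{𝔽_q}(ker(f_{a_i})) ≤ d. -/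
open Finset

namespace SkewAux

variable {Fq K : Type*} [Field Fq] [Fintype Fq] [Field K] [Fintype K] [Algebra Fq K]

local notation "q" => Fintype.card Fq

lemma add_pow_q (j : ℕ) (x y : K) :
    (x + y) ^ (Fintype.card Fq ^ j) =
      x ^ (Fintype.card Fq ^ j) + y ^ (Fintype.card Fq ^ j) := by
  obtain ⟨p, hp⟩ := CharP.exists Fq
  haveI : CharP K p := charP_of_injective_algebraMap (algebraMap Fq K).injective p
  obtain ⟨n, hpp, hcard⟩ := FiniteField.card Fq p
  haveI : Fact p.Prime := ⟨hpp⟩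
  rw [hcard, ← pow_mul]
  exact add_pow_char_pow x y p (n * j)

lemma sub_pow_q (j : ℕ) (x y : K) :
    (x - y) ^ (Fintype.card Fq ^ j) =
      x ^ (Fintype.card Fq ^ j) - y ^ (Fintype.card Fq ^ j) := by
  obtain ⟨p, hp⟩ := CharP.exists Fq
  haveI : CharP K p := charP_of_injective_algebraMap (algebraMap Fq K).injective p
  obtain ⟨n, hpp, hcard⟩ := FiniteField.card Fq p
  haveI : Fact p.Prime := ⟨hpp⟩
  rw [hcard, ← pow_mul]
  exact sub_pow_char_pow x y (n * j)

lemma smul_pow_q (j : ℕ) (s : Fq) (x : K) :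
    (s • x) ^ (Fintype.card Fq ^ j) = s • x ^ (Fintype.card Fq ^ j) := by
  rw [Algebra.smul_def, mul_pow, ← map_pow, FiniteField.pow_card_pow, Algebra.smul_def]

variable (Fq) in
/-- The skew evaluation operator `β ↦ ∑ c_j β^{q^j} a^{(q^j-1)/(q-1)}`. -/
def skewOp (a : K) (c : ℕ → K) (d : ℕ) : K →ₗ[Fq] K where
  toFun β := ∑ j ∈ Finset.range (d + 1),
      c j * β ^ (Fintype.card Fq ^ j) * (a : K) ^ (∑ s ∈ Finset.range j, Fintype.card Fq ^ s)
  map_add' x y := by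
    rw [← Finset.sum_add_distrib]
    refine Finset.sum_congr rfl fun j _ => ?_
    rw [add_pow_q]; ring
  map_smul' s x := by
    simp only [RingHom.id_apply, Finset.smul_sum]
    refine Finset.sum_congr rfl fun j _ => ?_
    rw [smul_pow_q, Algebra.smul_def, Algebra.smul_def]; ring

lemma skewOp_apply (a : K) (c : ℕ → K) (d : ℕ) (β : K) :
    skewOp Fq a c d β = ∑ j ∈ Finset.range (d + 1),
      c j * β ^ (Fintype.card Fq ^ j) * (a : K) ^ (∑ s ∈ Finset.range j, Fintype.card Fq ^ s) :=
  rfl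


variable (Fq) in
/-- Coefficients of the quotient on right division of `∑ c_j x^j` (degree `d+1`)
by `x - γ` in the skew polynomial ring. -/
def hcoef (c : ℕ → K) (γ : K) (d : ℕ) : ℕ → K :=
  fun j => if j ≤ d then haux c γ d (d - j) else 0
where
  haux (c : ℕ → K) (γ : K) (d : ℕ) : ℕ → K
  | 0 => c (d + 1)
  | (k+1) => c (d - k) + haux c γ d k * γ ^ (Fintype.card Fq ^ (d - k))

lemma hcoef_top (c : ℕ → K) (γ : K) (d : ℕ) : hcoef Fq c γ d d = c (d + 1) := by
  simp [hcoef, hcoef.haux]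

lemma hcoef_rec (c : ℕ → K) (γ : K) (d : ℕ) {j : ℕ} (hj : j ≤ d) :
    c (j + 1) = hcoef Fq c γ d j -
      hcoef Fq c γ d (j + 1) * γ ^ (Fintype.card Fq ^ (j + 1)) := by
  rcases eq_or_lt_of_le hj with rfl | hj
  · simp [hcoef, hcoef.haux]
  · have h1 : j + 1 ≤ d := hj
    have h2 : d - j = (d - (j+1)) + 1 := by omega
    have h3 : d - (d - (j+1)) = j + 1 := by omega
    simp only [hcoef, if_pos hj.le, if_pos h1, h2, hcoef.haux, h3]
    ring

/-- The key operator identity: right division by `x - γ`. -/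
lemma skewOp_factor (a : K) (c : ℕ → K) (γ : K) (d : ℕ) (β : K) :
    skewOp Fq a c (d + 1) β =
      skewOp Fq a (hcoef Fq c γ d) d
          (skewOp Fq a (fun j => if j = 0 then -γ else 1) 1 β) +
        (c 0 + hcoef Fq c γ d 0 * γ) * β := by
  set h := hcoef Fq c γ d with hh
  have hL : skewOp Fq a (fun j => if j = 0 then -γ else 1) 1 β
      = a * β ^ (Fintype.card Fq) - γ * β := by
    rw [skewOp_apply]
    rw [Finset.sum_range_succ, Finset.sum_range_one]
    simp [pow_one]
    ring
  rw [hL, skewOp_apply, skewOp_apply]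
  have expand : ∀ j ∈ Finset.range (d + 1),
      h j * (a * β ^ (Fintype.card Fq) - γ * β) ^ (Fintype.card Fq ^ j) *
          a ^ (∑ s ∈ Finset.range j, Fintype.card Fq ^ s)
      = h j * β ^ (Fintype.card Fq ^ (j+1)) *
          a ^ (∑ s ∈ Finset.range (j+1), Fintype.card Fq ^ s)
        - h j * γ ^ (Fintype.card Fq ^ j) * β ^ (Fintype.card Fq ^ j) *
            a ^ (∑ s ∈ Finset.range j, Fintype.card Fq ^ s) := by
    intro j _
    rw [Finset.sum_range_succ, pow_add, sub_pow_q, mul_pow, mul_pow, ← pow_mul,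
      pow_succ, mul_comm (Fintype.card Fq) (Fintype.card Fq ^ j)]
    ring
  rw [Finset.sum_congr rfl expand, Finset.sum_sub_distrib]
  -- now rewrite the LHS
  have peel : ∑ j ∈ Finset.range (d + 1 + 1),
      c j * β ^ (Fintype.card Fq ^ j) * a ^ (∑ s ∈ Finset.range j, Fintype.card Fq ^ s)
      = c 0 * β + ∑ j ∈ Finset.range (d + 1),
        c (j+1) * β ^ (Fintype.card Fq ^ (j+1)) *
          a ^ (∑ s ∈ Finset.range (j+1), Fintype.card Fq ^ s) := by
    rw [Finset.sum_range_succ']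
    simp [add_comm]
  rw [peel]
  have crw : ∀ j ∈ Finset.range (d + 1),
      c (j+1) * β ^ (Fintype.card Fq ^ (j+1)) *
          a ^ (∑ s ∈ Finset.range (j+1), Fintype.card Fq ^ s)
      = h j * β ^ (Fintype.card Fq ^ (j+1)) *
          a ^ (∑ s ∈ Finset.range (j+1), Fintype.card Fq ^ s)
        - h (j+1) * γ ^ (Fintype.card Fq ^ (j+1)) * β ^ (Fintype.card Fq ^ (j+1)) *
            a ^ (∑ s ∈ Finset.range (j+1), Fintype.card Fq ^ s) := by
    intro j hj
    rw [Finset.mem_range] at hj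
    rw [hcoef_rec (Fq := Fq) c γ d (Nat.lt_succ_iff.mp hj)]
    ring
  rw [Finset.sum_congr rfl crw, Finset.sum_sub_distrib]
  have shift : ∑ j ∈ Finset.range (d + 1),
      h (j+1) * γ ^ (Fintype.card Fq ^ (j+1)) * β ^ (Fintype.card Fq ^ (j+1)) *
        a ^ (∑ s ∈ Finset.range (j+1), Fintype.card Fq ^ s)
      = (∑ j ∈ Finset.range (d + 1),
          h j * γ ^ (Fintype.card Fq ^ j) * β ^ (Fintype.card Fq ^ j) *
            a ^ (∑ s ∈ Finset.range j, Fintype.card Fq ^ s)) - h 0 * γ * β := by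
    have last : h (d+1) = 0 := by simp [hh, hcoef]
    rw [eq_sub_iff_add_eq]
    have F0eq : h 0 * γ * β = h 0 * γ ^ (Fintype.card Fq ^ 0) * β ^ (Fintype.card Fq ^ 0) *
        a ^ (∑ s ∈ Finset.range 0, Fintype.card Fq ^ s) := by simp
    rw [F0eq, ← Finset.sum_range_succ' (fun j => h j * γ ^ (Fintype.card Fq ^ j) *
        β ^ (Fintype.card Fq ^ j) * a ^ (∑ s ∈ Finset.range j, Fintype.card Fq ^ s)) (d+1),
      Finset.sum_range_succ, last]
    simp
  rw [shift]
  ring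


lemma geom_mul (m : ℕ) :
    Fintype.card Fq * (∑ s ∈ Finset.range m, Fintype.card Fq ^ s) + 1 =
      (∑ s ∈ Finset.range m, Fintype.card Fq ^ s) + Fintype.card Fq ^ m := by
  induction m with
  | zero => simp
  | succ m ih =>
    rw [Finset.sum_range_succ, Nat.mul_add, pow_succ, mul_comm (Fintype.card Fq ^ m)]
    linarith

/-- For nonzero `x`, `x ^ (q * E) = x ^ E` where `E = ∑_{s<m} q^s`, `m = [K:Fq]`. -/
lemma pow_qE (x : K) (hx : x ≠ 0) :
    x ^ (Fintype.card Fq * ∑ s ∈ Finset.range (Module.finrank Fq K), Fintype.card Fq ^ s) =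
      x ^ (∑ s ∈ Finset.range (Module.finrank Fq K), Fintype.card Fq ^ s) := by
  haveI : FiniteDimensional Fq K := Module.Finite.of_finite
  have hcard : Fintype.card K = Fintype.card Fq ^ Module.finrank Fq K :=
    Module.card_eq_pow_finrank
  have hxq : x ^ (Fintype.card Fq ^ Module.finrank Fq K) = x := by
    rw [← hcard]; exact FiniteField.pow_card x
  have key := geom_mul (Fq := Fq) (Module.finrank Fq K)
  have step : x ^ (Fintype.card Fq * ∑ s ∈ Finset.range (Module.finrank Fq K),
      Fintype.card Fq ^ s) * x =
      x ^ (∑ s ∈ Finset.range (Module.finrank Fq K), Fintype.card Fq ^ s) * x := by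
    calc x ^ (Fintype.card Fq * ∑ s ∈ Finset.range (Module.finrank Fq K),
        Fintype.card Fq ^ s) * x
        = x ^ (Fintype.card Fq * (∑ s ∈ Finset.range (Module.finrank Fq K),
            Fintype.card Fq ^ s) + 1) := (pow_succ x _).symm
      _ = x ^ ((∑ s ∈ Finset.range (Module.finrank Fq K), Fintype.card Fq ^ s) +
            Fintype.card Fq ^ Module.finrank Fq K) := by rw [key]
      _ = x ^ (∑ s ∈ Finset.range (Module.finrank Fq K), Fintype.card Fq ^ s) *
            x ^ (Fintype.card Fq ^ Module.finrank Fq K) := pow_add x _ _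
      _ = x ^ (∑ s ∈ Finset.range (Module.finrank Fq K), Fintype.card Fq ^ s) * x := by
            rw [hxq]
  exact mul_right_cancel₀ hx step

lemma finrank_ker_comp_le (g L : K →ₗ[Fq] K) :
    Module.finrank Fq (LinearMap.ker (g ∘ₗ L)) ≤
      Module.finrank Fq (LinearMap.ker g) + Module.finrank Fq (LinearMap.ker L) := by
  haveI : FiniteDimensional Fq K := Module.Finite.of_finite
  have hmaps : ∀ x ∈ LinearMap.ker (g ∘ₗ L), L x ∈ LinearMap.ker g := by
    intro x hx
    simpa [LinearMap.mem_ker] using hx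
  set φ := L.restrict hmaps with hφ
  have h1 := LinearMap.finrank_range_add_finrank_ker φ
  have h2 : Module.finrank Fq ↥(LinearMap.range φ) ≤
      Module.finrank Fq ↥(LinearMap.ker g) := Submodule.finrank_le _
  have h3 : Module.finrank Fq ↥(LinearMap.ker φ) ≤
      Module.finrank Fq ↥(LinearMap.ker L) := by
    have hm : ∀ x : ↥(LinearMap.ker φ),
        ((LinearMap.ker (g ∘ₗ L)).subtype ∘ₗ (LinearMap.ker φ).subtype) x ∈
          LinearMap.ker L := by
      rintro ⟨⟨x, hx1⟩, hx2⟩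
      have := congrArg (Subtype.val) (LinearMap.mem_ker.mp hx2)
      simpa [hφ, LinearMap.restrict_apply] using this
    set ψ := LinearMap.codRestrict (LinearMap.ker L)
        ((LinearMap.ker (g ∘ₗ L)).subtype ∘ₗ (LinearMap.ker φ).subtype) hm with hψ
    refine LinearMap.finrank_le_finrank_of_injective (f := ψ) ?_
    intro x y hxy
    have hval : ((x : ↥(LinearMap.ker (g ∘ₗ L))) : K) =
        ((y : ↥(LinearMap.ker (g ∘ₗ L))) : K) := by
      simpa [hψ, LinearMap.codRestrict_apply] using congrArg Subtype.val hxy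
    exact Subtype.ext (Subtype.ext hval)
  omega

/-- Kernel of `β ↦ A β^q - B β` (with `A ≠ 0`) has dimension at most 1. -/
lemma finrank_ker_deg_one_le (A B : K) (hA : A ≠ 0) (L : K →ₗ[Fq] K)
    (hL : ∀ β, L β = A * β ^ (Fintype.card Fq) - B * β) :
    Module.finrank Fq (LinearMap.ker L) ≤ 1 := by
  classical
  haveI : FiniteDimensional Fq K := Module.Finite.of_finite
  have hq1 : 1 < Fintype.card Fq := Fintype.one_lt_card
  set P : Polynomial K := Polynomial.C A * Polynomial.X ^ (Fintype.card Fq) -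
    Polynomial.C B * Polynomial.X with hP
  have hPq : P.coeff (Fintype.card Fq) = A := by
    simp [hP, Polynomial.coeff_X, (by omega : ¬ Fintype.card Fq = 1)]
    intro h
    exact absurd h (by omega)
  have hP0 : P ≠ 0 := fun h => hA (by rw [← hPq, h, Polynomial.coeff_zero])
  have hdeg : P.natDegree ≤ Fintype.card Fq := by
    refine le_trans (Polynomial.natDegree_sub_le _ _) (max_le ?_ ?_)
    · exact le_trans (Polynomial.natDegree_C_mul_le _ _)
        (le_of_eq (Polynomial.natDegree_X_pow _))
    · exact le_trans (Polynomial.natDegree_C_mul_le _ _)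
        (le_trans Polynomial.natDegree_X_le (by omega))
  have hroot : ∀ x : K, x ∈ LinearMap.ker L → x ∈ P.roots.toFinset ∪ {0} := by
    intro x hx
    rcases eq_or_ne x 0 with rfl | hx0
    · simp
    refine Finset.mem_union_left _ ?_
    rw [Multiset.mem_toFinset, Polynomial.mem_roots hP0]
    have : L x = 0 := hx
    rw [hL x] at this
    simp [hP, Polynomial.IsRoot, this]
  have hcardker : Fintype.card ↥(LinearMap.ker L) ≤ Fintype.card Fq + 1 := by
    have := Finset.card_le_card_of_injOn (fun x : ↥(LinearMap.ker L) => (x : K))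
      (s := Finset.univ) (t := P.roots.toFinset ∪ {0})
      (fun x _ => hroot x x.2) (fun x _ y _ h => Subtype.ext h)
    rw [Finset.card_univ] at this
    refine this.trans ?_
    refine le_trans (Finset.card_union_le _ _) ?_
    have : P.roots.toFinset.card ≤ Fintype.card Fq :=
      le_trans (Multiset.toFinset_card_le _) (le_trans (Polynomial.card_roots' P) hdeg)
    simpa using this
  have hcardeq : Fintype.card ↥(LinearMap.ker L) =
      Fintype.card Fq ^ Module.finrank Fq ↥(LinearMap.ker L) := Module.card_eq_pow_finrank
  by_contra hcon
  push_neg at hcon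
  have h2 : 2 ≤ Module.finrank Fq ↥(LinearMap.ker L) := hcon
  have : Fintype.card Fq ^ 2 ≤ Fintype.card Fq ^ Module.finrank Fq ↥(LinearMap.ker L) :=
    Nat.pow_le_pow_right (by omega) h2
  rw [← hcardeq] at this
  nlinarith


variable (Fq) in
theorem sum_finrank_ker_skewOp_le {ℓ : ℕ} (a : Fin ℓ → Kˣ)
    (ha : ∀ i j : Fin ℓ, i ≠ j →
      (a i : K) ^ (∑ s ∈ Finset.range (Module.finrank Fq K), Fintype.card Fq ^ s) ≠
      (a j : K) ^ (∑ s ∈ Finset.range (Module.finrank Fq K), Fintype.card Fq ^ s)) :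
    ∀ (d : ℕ) (c : ℕ → K), c d ≠ 0 →
      ∑ i, Module.finrank Fq (LinearMap.ker (skewOp Fq (a i : K) c d)) ≤ d := by
  intro d
  induction d with
  | zero =>
    intro c hc
    have hker : ∀ i : Fin ℓ, LinearMap.ker (skewOp Fq (a i : K) c 0) = ⊥ := by
      intro i
      rw [LinearMap.ker_eq_bot']
      intro x hx
      rw [skewOp_apply, Finset.sum_range_one] at hx
      simp only [pow_zero, pow_one, Finset.range_zero, Finset.sum_empty, mul_one] at hx
      rcases mul_eq_zero.mp hx with h | h
      exacts [absurd h hc, h]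
    have hz : ∀ i : Fin ℓ, Module.finrank Fq (LinearMap.ker (skewOp Fq (a i : K) c 0)) = 0 :=
      fun i => by rw [hker i]; exact finrank_bot Fq K
    simp [hz]
  | succ d ih =>
    intro c hc
    by_cases H : ∀ i, LinearMap.ker (skewOp Fq (a i : K) c (d+1)) = ⊥
    · have hz : ∀ i : Fin ℓ,
          Module.finrank Fq (LinearMap.ker (skewOp Fq (a i : K) c (d+1))) = 0 :=
        fun i => by rw [H i]; exact finrank_bot Fq K
      simp [hz]
    push_neg at H
    obtain ⟨i₀, hi₀⟩ := H
    obtain ⟨β₁, hβmem, hβ0⟩ := Submodule.exists_mem_ne_zero_of_ne_bot hi₀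
    set γ : K := (a i₀ : K) * β₁ ^ (Fintype.card Fq) * β₁⁻¹ with hγ
    set h := hcoef Fq c γ d with hh
    set Lc : ℕ → K := fun j => if j = 0 then -γ else 1 with hLc
    have hLapp : ∀ b β : K, skewOp Fq b Lc 1 β = b * β ^ (Fintype.card Fq) - γ * β := by
      intro b β
      rw [skewOp_apply, Finset.sum_range_succ, Finset.sum_range_one]
      simp [hLc]
      ring
    have hγE : γ ^ (∑ s ∈ Finset.range (Module.finrank Fq K), Fintype.card Fq ^ s) =
        (a i₀ : K) ^ (∑ s ∈ Finset.range (Module.finrank Fq K), Fintype.card Fq ^ s) := by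
      rw [hγ, mul_pow, mul_pow, ← pow_mul, mul_comm (Fintype.card Fq), pow_mul, ← pow_mul,
        mul_comm _ (Fintype.card Fq), pow_qE β₁ hβ0, inv_pow]
      rw [mul_assoc, mul_inv_cancel₀ (pow_ne_zero _ hβ0), mul_one]
    have hLβ₁ : skewOp Fq (a i₀ : K) Lc 1 β₁ = 0 := by
      rw [hLapp, hγ]
      field_simp
      simp
    have hr : c 0 + h 0 * γ = 0 := by
      have h1 := skewOp_factor (Fq := Fq) (a i₀ : K) c γ d β₁
      rw [LinearMap.mem_ker.mp hβmem, hLβ₁, map_zero, zero_add] at h1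
      rcases mul_eq_zero.mp h1.symm with h' | h'
      · exact h'
      · exact absurd h' hβ0
    have hfact : ∀ i, skewOp Fq (a i : K) c (d+1) =
        skewOp Fq (a i : K) h d ∘ₗ skewOp Fq (a i : K) Lc 1 := by
      intro i
      ext β
      rw [LinearMap.comp_apply, skewOp_factor (Fq := Fq) (a i : K) c γ d β, ← hh, hr, zero_mul,
        add_zero]
    have hL1 : Module.finrank Fq (LinearMap.ker (skewOp Fq (a i₀ : K) Lc 1)) ≤ 1 :=
      finrank_ker_deg_one_le (a i₀ : K) γ (Units.ne_zero _) _ (hLapp _)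
    have hL0 : ∀ i, i ≠ i₀ →
        Module.finrank Fq (LinearMap.ker (skewOp Fq (a i : K) Lc 1)) = 0 := by
      intro i hi
      have hbot : LinearMap.ker (skewOp Fq (a i : K) Lc 1) = ⊥ := by
        rw [LinearMap.ker_eq_bot']
        intro x hx
        by_contra hx0
        rw [hLapp] at hx
        have heq : (a i : K) * x ^ (Fintype.card Fq) = γ * x := by
          linear_combination hx
        have heqE := congrArg
          (· ^ (∑ s ∈ Finset.range (Module.finrank Fq K), Fintype.card Fq ^ s)) heq
        simp only [mul_pow] at heqE
        rw [← pow_mul, pow_qE x hx0] at heqE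
        have hcancel := mul_right_cancel₀ (pow_ne_zero _ hx0) heqE
        rw [hγE] at hcancel
        exact ha i i₀ hi hcancel
      rw [hbot]
      exact finrank_bot Fq K
    calc ∑ i, Module.finrank Fq (LinearMap.ker (skewOp Fq (a i : K) c (d+1)))
        ≤ ∑ i, (Module.finrank Fq (LinearMap.ker (skewOp Fq (a i : K) h d)) +
            Module.finrank Fq (LinearMap.ker (skewOp Fq (a i : K) Lc 1))) := by
          refine Finset.sum_le_sum fun i _ => ?_
          rw [hfact i]
          exact finrank_ker_comp_le _ _
      _ = (∑ i, Module.finrank Fq (LinearMap.ker (skewOp Fq (a i : K) h d))) +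
            ∑ i, Module.finrank Fq (LinearMap.ker (skewOp Fq (a i : K) Lc 1)) :=
          Finset.sum_add_distrib
      _ ≤ d + 1 := by
          have hsum1 : (∑ i, Module.finrank Fq
              (LinearMap.ker (skewOp Fq (a i : K) h d))) ≤ d := by
            refine ih h ?_
            rw [hh, hcoef_top]
            exact hc
          have hsum2 : (∑ i, Module.finrank Fq
              (LinearMap.ker (skewOp Fq (a i : K) Lc 1))) ≤ 1 := by
            rw [Finset.sum_eq_single i₀ (fun i _ hi => hL0 i hi)
              (fun hmem => absurd (Finset.mem_univ i₀) hmem)]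
            exact hL1
          omega

end SkewAux

/-- **Roots of skew polynomials.**  Let `a₁, …, a_ℓ ∈ 𝔽_{q^m}^*` have pairwise distinct norms
over `𝔽_q`, and let `f = f₀ + f₁x + ⋯ + f_d x^d` be a skew polynomial with `f_d ≠ 0`.  For
`a ∈ 𝔽_{q^m}^*` let `f_a(β) = ∑_j f_j β^{q^j} a^{(q^j-1)/(q-1)}` be the associated
`𝔽_q`-linear map.  Then `∑ i, dim_{𝔽_q} ker (f_{a_i}) ≤ d`. -/
theorem skew_polynomial_roots (Fq K : Type*) [Field Fq] [Fintype Fq] [Field K] [Fintype K]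
    [Algebra Fq K] {ℓ : ℕ} (hℓ : 0 < ℓ)
    (a : Fin ℓ → Kˣ)
    (ha : ∀ i j : Fin ℓ, i ≠ j →
      (a i : K) ^ (∑ s ∈ Finset.range (Module.finrank Fq K), Fintype.card Fq ^ s) ≠
      (a j : K) ^ (∑ s ∈ Finset.range (Module.finrank Fq K), Fintype.card Fq ^ s))
    (d : ℕ) (c : ℕ → K) (hc : c d ≠ 0)
    (f : Fin ℓ → (K →ₗ[Fq] K))
    (hf : ∀ (i : Fin ℓ) (β : K),
      f i β = ∑ j ∈ Finset.range (d + 1),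
        c j * β ^ (Fintype.card Fq ^ j) *
          (a i : K) ^ (∑ s ∈ Finset.range j, Fintype.card Fq ^ s)) :
    ∑ i, Module.finrank Fq (LinearMap.ker (f i)) ≤ d := by
  have hfeq : ∀ i, f i = SkewAux.skewOp Fq (a i : K) c d := by
    intro i
    ext β
    rw [hf i β, SkewAux.skewOp_apply]
  calc ∑ i, Module.finrank Fq (LinearMap.ker (f i))
      = ∑ i, Module.finrank Fq (LinearMap.ker (SkewAux.skewOp Fq (a i : K) c d)) :=
        Finset.sum_congr rfl fun i _ => by rw [hfeq i]
    _ ≤ d := SkewAux.sum_finrank_ker_skewOp_le Fq a ha d c hc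
end

section
/- (Linearized Reed–Solomon codes are MSRD) Let a_1, …, a_ℓ ∈ 𝔽_{q^m}^* be such that N_{𝔽_{q^m}/𝔽_q}(a_i) ≠ N_{𝔽_{q^m}/𝔽_q}(a_j) whenever i ≠ j, and let β_1, …, β_m be a basis of 𝔽_{q^m} over 𝔽_q. Let n_1, …, n_ℓ be positive integers with n_i ≤ m, n = n_1 + … + n_ℓ, and k ∈ {1,…,n}. For f = (f_0,…,f_{k−1}) ∈ 𝔽_{q^m}^k and a ∈ 𝔽_{q^m}^*, define f_a(β) = Σ_{j=0}^{k−1} f_j β^{q^j} a^{(q^j−1)/(q−1)}, and define the linearized Reed–Solomon code 𝒞 = {(f_{a_1}(β_1),…,f_{a_1}(β_{n_1}), f_{a_2}(β_1),…,f_{a_2}(β_{n_2}), …, f_{a_ℓ}(β_1),…,f_{a_ℓ}(β_{n_ℓ})) : f ∈ 𝔽_{q^m}^k} ⊆ 𝔽_{q^m}^n. Then 𝒞 is an 𝔽_{q^m}-linear subspace of dimension k over 𝔽_{q^m}, and every nonzero codeword c ∈ 𝒞 satisfies srk(c) ≥ n − k + 1; that is, 𝒞 attains the Singleton bound d(𝒞)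 = n − k + 1 and is MSRD. -/
open Finset

namespace LRS

set_option linter.unusedSectionVars false

/-- truncated norm exponent -/
def sig (q t : ℕ) : ℕ := ∑ s ∈ Finset.range t, q ^ s

lemma sig_zero (q : ℕ) : sig q 0 = 0 := by simp [sig]

lemma sig_succ (q t : ℕ) : sig q (t + 1) = sig q t + q ^ t := by
  simp [sig, Finset.sum_range_succ]

lemma geom (q m : ℕ) (hq : 1 ≤ q) : (q - 1) * sig q m = q ^ m - 1 := by
  induction m with
  | zero => simp [sig]
  | succ m ih =>
    rw [sig_succ, Nat.mul_add, ih, Nat.sub_mul, pow_succ, one_mul, Nat.mul_comm q (q ^ m)]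
    have h1 : 1 ≤ q ^ m := Nat.one_le_pow _ _ hq
    have h2 : q ^ m ≤ q ^ m * q := Nat.le_mul_of_pos_right _ hq
    omega

variable {Fq K : Type*} [Field Fq] [Fintype Fq] [Field K] [Fintype K] [Algebra Fq K]

lemma add_pow_cardpow (x y : K) (t : ℕ) :
    (x + y) ^ (Fintype.card Fq) ^ t = x ^ (Fintype.card Fq) ^ t + y ^ (Fintype.card Fq) ^ t := by
  set p := ringChar Fq with hp
  haveI : CharP Fq p := ringChar.charP Fq
  obtain ⟨e, hprime, hcard⟩ := FiniteField.card Fq p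
  haveI := Fact.mk hprime
  haveI : CharP K p := charP_of_injective_algebraMap (algebraMap Fq K).injective p
  rw [hcard, ← pow_mul, add_pow_char_pow]

lemma sub_pow_cardpow (x y : K) (t : ℕ) :
    (x - y) ^ (Fintype.card Fq) ^ t = x ^ (Fintype.card Fq) ^ t - y ^ (Fintype.card Fq) ^ t := by
  set p := ringChar Fq with hp
  haveI : CharP Fq p := ringChar.charP Fq
  obtain ⟨e, hprime, hcard⟩ := FiniteField.card Fq p
  haveI := Fact.mk hprime
  haveI : CharP K p := charP_of_injective_algebraMap (algebraMap Fq K).injective p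
  rw [hcard, ← pow_mul, sub_pow_char_pow]

variable (Fq) in
/-- `x ↦ x ^ q ^ t` as an `Fq`-linear map. -/
noncomputable def frobPow (t : ℕ) : K →ₗ[Fq] K where
  toFun x := x ^ (Fintype.card Fq) ^ t
  map_add' x y := add_pow_cardpow x y t
  map_smul' c x := by
    simp only [RingHom.id_apply, Algebra.smul_def, mul_pow, ← map_pow,
      FiniteField.pow_card_pow]

lemma frobPow_apply (t : ℕ) (x : K) : frobPow Fq t x = x ^ (Fintype.card Fq) ^ t := rfl

variable (Fq) in
/-- The pseudo-linear evaluation operator `x ↦ ∑ t, f t * x^(q^t) * a^(σ t)`. -/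
noncomputable def op {k : ℕ} (f : Fin k → K) (a : K) : K →ₗ[Fq] K :=
  ∑ t : Fin k, (LinearMap.mulLeft Fq (f t * a ^ sig (Fintype.card Fq) (t : ℕ))).comp
    (frobPow Fq (t : ℕ))

lemma op_apply {k : ℕ} (f : Fin k → K) (a x : K) :
    op Fq f a x = ∑ t : Fin k,
      f t * x ^ (Fintype.card Fq) ^ (t : ℕ) * a ^ sig (Fintype.card Fq) (t : ℕ) := by
  simp only [op, LinearMap.sum_apply, LinearMap.comp_apply, LinearMap.mulLeft_apply,
    frobPow_apply]
  exact Finset.sum_congr rfl fun t _ => by ring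

variable (Fq) in
/-- `ψ_{c,b} : x ↦ b * x^q - c * x`. -/
noncomputable def psi (c b : K) : K →ₗ[Fq] K :=
  (LinearMap.mulLeft Fq b).comp (frobPow Fq 1) - LinearMap.mulLeft Fq c

lemma psi_apply (c b x : K) : psi Fq c b x = b * x ^ (Fintype.card Fq) - c * x := by
  simp [psi, frobPow_apply]


/-- extension by zero -/
def ext0 {k : ℕ} (g : Fin k → K) : ℕ → K := fun t => if h : t < k then g ⟨t, h⟩ else 0

lemma ext0_add {k : ℕ} (g h : Fin k → K) (t : ℕ) :
    ext0 (g + h) t = ext0 g t + ext0 h t := by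
  unfold ext0; split <;> simp

lemma ext0_smul {k : ℕ} (r : K) (g : Fin k → K) (t : ℕ) :
    ext0 (r • g) t = r * ext0 g t := by
  unfold ext0; split <;> simp

lemma ext0_top {k : ℕ} (g : Fin k → K) {t : ℕ} (h : k ≤ t) : ext0 g t = 0 := by
  unfold ext0; rw [dif_neg (by omega)]

variable (Fq) in
/-- multiplication by `(X - c)` on the right, coefficientwise. -/
noncomputable def Tmap (c : K) (k : ℕ) : (Fin k → K) →ₗ[K] (Fin (k + 1) → K) where
  toFun g := fun t => (if (t : ℕ) = 0 then 0 else ext0 g ((t : ℕ) - 1)) -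
      ext0 g (t : ℕ) * c ^ (Fintype.card Fq) ^ (t : ℕ)
  map_add' g h := by
    funext t
    simp only [ext0_add, Pi.add_apply]
    split <;> ring
  map_smul' r g := by
    funext t
    simp only [ext0_smul, RingHom.id_apply, Pi.smul_apply, smul_eq_mul]
    split <;> ring

lemma Tmap_apply (c : K) {k : ℕ} (g : Fin k → K) (t : Fin (k + 1)) :
    Tmap Fq c k g t = (if (t : ℕ) = 0 then 0 else ext0 g ((t : ℕ) - 1)) -
      ext0 g (t : ℕ) * c ^ (Fintype.card Fq) ^ (t : ℕ) := rfl

/-- The fundamental factorization identity: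
`(g·(X-c))(θ_b) = g(θ_b) ∘ ψ_{c,b}`. -/
lemma op_Tmap (c : K) {k : ℕ} (g : Fin k → K) (b : K) :
    op Fq (Tmap Fq c k g) b = (op Fq g b).comp (psi Fq c b) := by
  ext x
  rw [LinearMap.comp_apply, op_apply, op_apply, psi_apply]
  set q := Fintype.card Fq with hq
  set e : ℕ → K := ext0 g with he
  have hL : (∑ t : Fin (k+1), Tmap Fq c k g t * x ^ q ^ (t:ℕ) * b ^ sig q (t:ℕ)) =
      ∑ t ∈ Finset.range (k+1),
        ((if t = 0 then 0 else e (t - 1)) - e t * c ^ q ^ t) * x ^ q ^ t * b ^ sig q t :=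
    Fin.sum_univ_eq_sum_range
      (fun t : ℕ => ((if t = 0 then 0 else e (t - 1)) - e t * c ^ q ^ t) * x ^ q ^ t * b ^ sig q t)
      (k+1)
  have hR : (∑ s : Fin k, g s * (b * x ^ q - c * x) ^ q ^ (s:ℕ) * b ^ sig q (s:ℕ)) =
      ∑ s ∈ Finset.range k, e s * (b * x ^ q - c * x) ^ q ^ s * b ^ sig q s := by
    rw [← Fin.sum_univ_eq_sum_range
      (fun s : ℕ => e s * (b * x ^ q - c * x) ^ q ^ s * b ^ sig q s) k]
    refine Finset.sum_congr rfl fun s _ => ?_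
    simp only [he, ext0, Fin.is_lt, dif_pos, Fin.eta]
  rw [hL, hR]
  have split : ∀ t ∈ Finset.range (k+1),
      ((if t = 0 then 0 else e (t - 1)) - e t * c ^ q ^ t) * x ^ q ^ t * b ^ sig q t =
      (if t = 0 then 0 else e (t - 1)) * x ^ q ^ t * b ^ sig q t
        - e t * c ^ q ^ t * x ^ q ^ t * b ^ sig q t := fun t _ => by ring
  rw [Finset.sum_congr rfl split, Finset.sum_sub_distrib]
  rw [Finset.sum_range_succ' (fun t => (if t = 0 then 0 else e (t - 1)) * x ^ q ^ t * b ^ sig q t) k]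
  rw [Finset.sum_range_succ (fun t => e t * c ^ q ^ t * x ^ q ^ t * b ^ sig q t) k]
  rw [show e k = 0 from ext0_top g (le_refl k)]
  simp only [if_pos rfl, if_true, Nat.add_sub_cancel, if_neg (Nat.succ_ne_zero _), zero_mul, mul_zero,
    add_zero, zero_sub, sub_zero, zero_add]
  rw [← Finset.sum_sub_distrib]
  refine Finset.sum_congr rfl fun s hs => ?_
  have h1 : (b * x ^ q - c * x) ^ q ^ s = b ^ q ^ s * (x ^ q) ^ q ^ s - c ^ q ^ s * x ^ q ^ s :=
    by rw [sub_pow_cardpow, mul_pow, mul_pow]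
  have h2 : x ^ q ^ (s+1) = (x ^ q) ^ q ^ s := by
    rw [← pow_mul, pow_succ, mul_comm (q ^ s) q, pow_mul']
  have h3 : b ^ sig q (s+1) = b ^ sig q s * b ^ q ^ s := by rw [sig_succ, pow_add]
  rw [h1, h2, h3]
  ring


/-- Fixed points of the `q`-power map are exactly the subfield `Fq`. -/
lemma exists_of_pow_card {u : K} (hu : u ^ (Fintype.card Fq) = u) :
    ∃ c : Fq, algebraMap Fq K c = u := by
  classical
  by_cases h0 : u = 0
  · exact ⟨0, by simp [h0]⟩
  set q := Fintype.card Fq with hq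
  have hq2 : 1 < q := Fintype.one_lt_card
  have hu1 : u ^ (q - 1) = 1 := by
    have : u ^ (q - 1) * u = 1 * u := by
      rw [one_mul, ← pow_succ]
      rwa [Nat.sub_add_cancel (by omega)]
    exact mul_right_cancel₀ h0 this
  -- the image of `Fqˣ` is a finset of cardinality `q - 1` inside the `(q-1)`-th roots of unity
  set A : Finset K := Finset.univ.image (fun c : Fqˣ => algebraMap Fq K (c : Fq)) with hA
  have hinj : Function.Injective (fun c : Fqˣ => algebraMap Fq K (c : Fq)) := by
    intro c d hcd
    exact Units.ext ((algebraMap Fq K).injective hcd)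
  have hcardA : A.card = q - 1 := by
    rw [hA, Finset.card_image_of_injective _ hinj, Finset.card_univ, Fintype.card_units]
  have hsub : A ⊆ Polynomial.nthRootsFinset (q - 1) (1 : K) := by
    intro x hx
    rw [hA, Finset.mem_image] at hx
    obtain ⟨c, _, rfl⟩ := hx
    rw [Polynomial.mem_nthRootsFinset (by omega), ← map_pow]
    have : (c : Fq) ^ (q - 1) = 1 := by
      have h5 : c ^ Fintype.card Fqˣ = 1 := pow_card_eq_one
      rw [Fintype.card_units] at h5
      have this := h5
      have := congrArg (Units.val) this
      simpa using this
    rw [this, map_one]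
  have hcardN : (Polynomial.nthRootsFinset (q - 1) (1 : K)).card ≤ q - 1 := by
    have := Polynomial.card_nthRoots (q - 1) (1 : K)
    classical
    calc (Polynomial.nthRootsFinset (q - 1) (1 : K)).card
        = (Polynomial.nthRoots (q - 1) (1 : K)).toFinset.card := by
          rw [Polynomial.nthRootsFinset_def]
      _ ≤ Multiset.card (Polynomial.nthRoots (q - 1) (1 : K)) := Multiset.toFinset_card_le _
      _ ≤ q - 1 := this
  have hAeq : A = Polynomial.nthRootsFinset (q - 1) (1 : K) :=
    Finset.eq_of_subset_of_card_le hsub (by omega)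
  have humem : u ∈ Polynomial.nthRootsFinset (q - 1) (1 : K) := by
    rw [Polynomial.mem_nthRootsFinset (by omega)]
    exact hu1
  rw [← hAeq, hA, Finset.mem_image] at humem
  obtain ⟨c, _, hc⟩ := humem
  exact ⟨(c : Fq), hc⟩

/-- rank–nullity style bound: if `φ` maps `W` into `S` then
`dim W ≤ dim S + dim ker φ`. -/
lemma finrank_le_of_maps_to [FiniteDimensional Fq K] (φ : K →ₗ[Fq] K)
    (W S : Submodule Fq K) (h : ∀ x ∈ W, φ x ∈ S) :
    Module.finrank Fq W ≤ Module.finrank Fq S + Module.finrank Fq (LinearMap.ker φ) := by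
  set ρ : W →ₗ[Fq] S := φ.restrict h with hρ
  have hrn := LinearMap.finrank_range_add_finrank_ker ρ
  have h1 : Module.finrank Fq (LinearMap.range ρ) ≤ Module.finrank Fq S :=
    (LinearMap.range ρ).finrank_le
  have h2 : Module.finrank Fq (LinearMap.ker ρ) ≤ Module.finrank Fq (LinearMap.ker φ) := by
    have hmem : ∀ x : LinearMap.ker ρ, ((x : W) : K) ∈ LinearMap.ker φ := by
      intro x
      have hx := x.2
      rw [LinearMap.mem_ker] at hx ⊢
      have h6 : ((ρ (x : W)) : K) = 0 := by rw [hx]; rfl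
      exact h6
    let ι : LinearMap.ker ρ →ₗ[Fq] LinearMap.ker φ :=
      { toFun := fun x => ⟨((x : W) : K), hmem x⟩
        map_add' := fun x y => rfl
        map_smul' := fun r x => rfl }
    have hι : Function.Injective ι := by
      intro x y hxy
      have h7 : ((ι x : K)) = ((ι y : K)) := congrArg Subtype.val hxy
      exact Subtype.ext (Subtype.ext h7)
    exact LinearMap.finrank_le_finrank_of_injective hι
  omega


lemma key [FiniteDimensional Fq K] {m : ℕ}
    (hcard : Fintype.card K = Fintype.card Fq ^ m)
    {ℓ : ℕ} (a : Fin ℓ → Kˣ)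
    (ha : ∀ i j : Fin ℓ, i ≠ j →
      (a i : K) ^ sig (Fintype.card Fq) m ≠ (a j : K) ^ sig (Fintype.card Fq) m) :
    ∀ (k : ℕ) (f : Fin k → K), f ≠ 0 →
      ∑ i, Module.finrank Fq (LinearMap.ker (op Fq f (a i : K))) ≤ k - 1 := by
  classical
  set q := Fintype.card Fq with hq
  have hq2 : 1 < q := Fintype.one_lt_card
  have hpow1 : ∀ x : K, x ≠ 0 → x ^ ((q - 1) * sig q m) = 1 := by
    intro x hx
    rw [geom q m (by omega), ← hcard]
    exact FiniteField.pow_card_sub_one_eq_one x hx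
  intro k
  induction k with
  | zero =>
      intro f hf
      exact absurd (Subsingleton.elim f 0) hf
  | succ k ih =>
      intro f hf
      by_cases hker : ∀ i : Fin ℓ, LinearMap.ker (op Fq f (a i : K)) = ⊥
      · have hz : ∀ i : Fin ℓ, Module.finrank Fq (LinearMap.ker (op Fq f (a i : K))) = 0 := by
          intro i; rw [hker i]; exact finrank_bot Fq K
        rw [Finset.sum_congr rfl (fun i _ => hz i)]
        simp
      push_neg at hker
      obtain ⟨i, hi⟩ := hker
      obtain ⟨γ, hγmem, hγ0⟩ := (Submodule.ne_bot_iff _).mp hi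
      rw [LinearMap.mem_ker] at hγmem
      set c : K := γ ^ (q - 1) * (a i : K) with hc
      have hγq : γ ^ q = γ ^ (q - 1) * γ := by rw [← pow_succ]; congr 1; omega
      have hψγ : psi Fq c (a i : K) γ = 0 := by
        rw [psi_apply, hc, hγq]; ring
      -- the remainder functional R
      set R : (Fin (k+1) → K) →ₗ[K] K :=
        ∑ t : Fin (k+1), (LinearMap.proj t).smulRight (γ ^ q ^ (t:ℕ) * (a i : K) ^ sig q (t:ℕ))
        with hR
      have hRapply : ∀ f' : Fin (k+1) → K, R f' = op Fq f' (a i : K) γ := by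
        intro f'
        rw [op_apply, hR]
        simp only [LinearMap.sum_apply, LinearMap.smulRight_apply, LinearMap.proj_apply,
          smul_eq_mul]
        exact Finset.sum_congr rfl fun t _ => by ring
      set u : Fin (k+1) → K := Pi.single (0 : Fin (k+1)) (1 : K) with hu
      have hRsingle : R u = γ := by
        rw [hRapply, op_apply]
        rw [Finset.sum_eq_single_of_mem (0 : Fin (k+1)) (Finset.mem_univ _)]
        · simp [hu, sig_zero]
        · intro t _ ht
          rw [hu, Pi.single_eq_of_ne ht]
          ring
      have hRsurj : LinearMap.range R = ⊤ := by
        rw [LinearMap.range_eq_top]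
        intro z
        refine ⟨(z * γ⁻¹) • u, ?_⟩
        rw [map_smul, hRsingle, smul_eq_mul]
        field_simp
      have hdimpi : ∀ N : ℕ, Module.finrank K (Fin N → K) = N := by
        intro N; simp
      have hkerR : Module.finrank K (LinearMap.ker R) = k := by
        have hrn := LinearMap.finrank_range_add_finrank_ker R
        rw [hRsurj, hdimpi (k+1), finrank_top] at hrn
        have : Module.finrank K K = 1 := Module.finrank_self K
        omega
      -- T is injective
      have hTinj : Function.Injective (Tmap Fq c k) := by
        rw [← LinearMap.ker_eq_bot, LinearMap.ker_eq_bot']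
        intro g hg
        have hcomp : ∀ t : Fin (k+1), Tmap Fq c k g t = 0 := fun t => congrFun hg t
        have step : ∀ s : ℕ, s < k → ext0 g (s+1) = 0 → ext0 g s = 0 := by
          intro s hs hnext
          have h8 := hcomp ⟨s+1, by omega⟩
          rw [Tmap_apply] at h8
          simp only [] at h8
          rw [if_neg (Nat.succ_ne_zero s), hnext, Nat.add_sub_cancel] at h8
          simpa using h8
        have claim : ∀ j : ℕ, ext0 g (k - j) = 0 := by
          intro j
          induction j with
          | zero => simpa using ext0_top g (le_refl k)
          | succ j hj =>
            by_cases hjk : k ≤ j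
            · rw [show k - (j+1) = k - j by omega]; exact hj
            · push_neg at hjk
              apply step (k - (j+1)) (by omega)
              rw [show k - (j+1) + 1 = k - j by omega]; exact hj
        funext u
        have h9 := claim (k - u.val)
        rw [show k - (k - u.val) = u.val by omega] at h9
        simp only [ext0] at h9
        rw [dif_pos u.isLt] at h9
        simpa using h9
      have hrangeT : Module.finrank K (LinearMap.range (Tmap Fq c k)) = k := by
        rw [LinearMap.finrank_range_of_inj hTinj, hdimpi k]
      have hTker : LinearMap.range (Tmap Fq c k) ≤ LinearMap.ker R := by
        rintro f' ⟨g, rfl⟩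
        rw [LinearMap.mem_ker, hRapply, op_Tmap, LinearMap.comp_apply, hψγ, map_zero]
      have heq : LinearMap.range (Tmap Fq c k) = LinearMap.ker R :=
        Submodule.eq_of_le_of_finrank_le hTker (by rw [hkerR, hrangeT])
      have hfmem : f ∈ LinearMap.ker R := by
        rw [LinearMap.mem_ker, hRapply]; exact hγmem
      rw [← heq] at hfmem
      obtain ⟨g, hg⟩ := hfmem
      have hg0 : g ≠ 0 := by
        rintro rfl
        rw [map_zero] at hg
        exact hf hg.symm
      have hop : ∀ b : K, op Fq f b = (op Fq g b).comp (psi Fq c b) := by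
        intro b
        rw [← hg]
        exact op_Tmap c g b
      -- kernels of ψ
      have hψj : ∀ j : Fin ℓ, j ≠ i → LinearMap.ker (psi Fq c (a j : K)) = ⊥ := by
        intro j hj
        rw [LinearMap.ker_eq_bot']
        intro x hx
        by_contra hx0
        rw [psi_apply] at hx
        rw [sub_eq_zero] at hx
        have h1 : ((a j : K) * x ^ q) ^ sig q m = (c * x) ^ sig q m := by rw [hx]
        have h2 : x ^ (q * sig q m) = x ^ sig q m := by
          have hqs : q * sig q m = (q - 1) * sig q m + sig q m := by
            have h4 : q - 1 + 1 = q := by omega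
            calc q * sig q m = ((q - 1) + 1) * sig q m := by rw [h4]
              _ = (q - 1) * sig q m + sig q m := by ring
          rw [hqs, pow_add, hpow1 x hx0, one_mul]
        rw [mul_pow, mul_pow, ← pow_mul, h2] at h1
        have h3 : c ^ sig q m = (a i : K) ^ sig q m := by
          rw [hc, mul_pow, ← pow_mul, hpow1 γ hγ0, one_mul]
        rw [h3] at h1
        have hxne : x ^ sig q m ≠ 0 := pow_ne_zero _ hx0
        exact ha j i hj (mul_right_cancel₀ hxne h1)
      have hψi : Module.finrank Fq (LinearMap.ker (psi Fq c (a i : K))) ≤ 1 := by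
        have hle : LinearMap.ker (psi Fq c (a i : K)) ≤ Submodule.span Fq {γ} := by
          intro x hx
          rw [LinearMap.mem_ker, psi_apply] at hx
          by_cases hx0 : x = 0
          · rw [hx0]; exact Submodule.zero_mem _
          · have hai : (a i : K) ≠ 0 := Units.ne_zero _
            rw [sub_eq_zero, hc] at hx
            have h5 : (a i : K) * (γ ^ (q-1) * x) = γ ^ (q-1) * (a i : K) * x := by ring
            have h1 : x ^ q = γ ^ (q-1) * x := mul_left_cancel₀ hai (hx.trans h5.symm)
            have hu : (x * γ⁻¹) ^ q = x * γ⁻¹ := by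
              rw [mul_pow, h1, inv_pow, hγq]
              field_simp
            obtain ⟨r, hr⟩ := exists_of_pow_card hu
            rw [Submodule.mem_span_singleton]
            refine ⟨r, ?_⟩
            rw [Algebra.smul_def, hr]
            field_simp
        calc Module.finrank Fq (LinearMap.ker (psi Fq c (a i : K)))
            ≤ Module.finrank Fq (Submodule.span Fq {γ}) := Submodule.finrank_mono hle
          _ = 1 := finrank_span_singleton hγ0
      -- sum up
      have hb : ∀ j : Fin ℓ,
          Module.finrank Fq (LinearMap.ker (op Fq f (a j : K))) ≤
          Module.finrank Fq (LinearMap.ker (op Fq g (a j : K))) +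
          Module.finrank Fq (LinearMap.ker (psi Fq c (a j : K))) := by
        intro j
        rw [hop (a j : K)]
        refine finrank_le_of_maps_to (psi Fq c (a j : K)) _ (LinearMap.ker (op Fq g (a j : K)))
          (fun x hx => ?_) |>.trans ?_
        · rw [LinearMap.mem_ker] at hx ⊢
          rw [LinearMap.comp_apply] at hx
          exact hx
        · omega
      have hsumψ : ∑ j, Module.finrank Fq (LinearMap.ker (psi Fq c (a j : K))) ≤ 1 := by
        rw [Finset.sum_eq_single_of_mem i (Finset.mem_univ _)]
        · exact hψi
        · intro j _ hj
          rw [hψj j hj]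
          exact finrank_bot Fq K
      rcases Nat.eq_zero_or_pos k with hk0 | hk0
      · subst hk0
        exact absurd (Subsingleton.elim g 0) hg0
      · have hA := ih g hg0
        have hC : ∑ j, Module.finrank Fq (LinearMap.ker (op Fq f (a j : K))) ≤
            ∑ j, Module.finrank Fq (LinearMap.ker (op Fq g (a j : K))) +
            ∑ j, Module.finrank Fq (LinearMap.ker (psi Fq c (a j : K))) := by
          rw [← Finset.sum_add_distrib]
          exact Finset.sum_le_sum fun j _ => hb j
        omega

end LRS

/-- The sum-rank weight of a vector in `𝔽_{q^m}^{n₁} × ⋯ × 𝔽_{q^m}^{n_ℓ}` with respect to the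
subfield `𝔽_q`: the sum of the `𝔽_q`-dimensions of the `𝔽_q`-spans of the blocks. -/
noncomputable def srkVec (Fq : Type*) {K : Type*} [Field Fq] [Field K] [Algebra Fq K]
    {ℓ : ℕ} {nn : Fin ℓ → ℕ} (c : ∀ i : Fin ℓ, Fin (nn i) → K) : ℕ :=
  ∑ i, Module.finrank Fq (Submodule.span Fq (Set.range (c i)))

open LRS in
/-- **Linearized Reed–Solomon codes are MSRD.**  Given `a₁, …, a_ℓ ∈ 𝔽_{q^m}^*` with pairwise
distinct norms and a basis `β₁, …, β_m` of `𝔽_{q^m}` over `𝔽_q`, the linearized Reed–Solomon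
code of dimension `k` is an `𝔽_{q^m}`-linear subspace of dimension `k`, every nonzero codeword
has sum-rank weight at least `n - k + 1`, and the code attains `d(𝒞) = n - k + 1`,
i.e. it is MSRD. -/
theorem linearized_reed_solomon_MSRD (Fq K : Type*) [Field Fq] [Fintype Fq] [Field K]
    [Fintype K] [Algebra Fq K] {ℓ : ℕ} (hℓ : 0 < ℓ)
    (m : ℕ) (β : Module.Basis (Fin m) Fq K)
    (a : Fin ℓ → Kˣ)
    (ha : ∀ i j : Fin ℓ, i ≠ j →
      (a i : K) ^ (∑ s ∈ Finset.range m, Fintype.card Fq ^ s) ≠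
      (a j : K) ^ (∑ s ∈ Finset.range m, Fintype.card Fq ^ s))
    (nn : Fin ℓ → ℕ) (hnpos : ∀ i, 0 < nn i) (hnm : ∀ i, nn i ≤ m)
    (n : ℕ) (hn : n = ∑ i, nn i) (k : ℕ) (hk1 : 1 ≤ k) (hkn : k ≤ n) :
    ∃ 𝒞 : Submodule K (∀ i : Fin ℓ, Fin (nn i) → K),
      (𝒞 : Set (∀ i : Fin ℓ, Fin (nn i) → K)) =
        {c | ∃ f : Fin k → K, ∀ (i : Fin ℓ) (j : Fin (nn i)),
          c i j = ∑ t : Fin k,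
            f t * β (Fin.castLE (hnm i) j) ^ (Fintype.card Fq ^ (t : ℕ)) *
              (a i : K) ^ (∑ s ∈ Finset.range (t : ℕ), Fintype.card Fq ^ s)} ∧
      Module.finrank K 𝒞 = k ∧
      (∀ c ∈ 𝒞, c ≠ 0 → n - k + 1 ≤ srkVec Fq c) ∧
      sInf {w | ∃ c ∈ 𝒞, c ≠ 0 ∧ srkVec Fq c = w} = n - k + 1 := by
  classical
  haveI : FiniteDimensional Fq K := Module.Finite.of_basis β
  have hq2 : 1 < Fintype.card Fq := Fintype.one_lt_card
  have hcard : Fintype.card K = Fintype.card Fq ^ m := by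
    simpa using Module.card_fintype β
  set q := Fintype.card Fq with hq
  -- the evaluation (encoding) map
  set Ψ : (Fin k → K) →ₗ[K] (∀ i : Fin ℓ, Fin (nn i) → K) :=
    LinearMap.pi (fun i => LinearMap.pi (fun j =>
      ∑ t : Fin k, (LinearMap.proj t).smulRight
        (β (Fin.castLE (hnm i) j) ^ q ^ (t : ℕ) * (a i : K) ^ sig q (t : ℕ)))) with hΨ
  have hΨapply : ∀ (f : Fin k → K) (i : Fin ℓ) (j : Fin (nn i)),
      Ψ f i j = ∑ t : Fin k, f t * β (Fin.castLE (hnm i) j) ^ q ^ (t : ℕ) *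
        (a i : K) ^ (∑ s ∈ Finset.range (t : ℕ), q ^ s) := by
    intro f i j
    rw [hΨ]
    simp only [LinearMap.pi_apply, LinearMap.sum_apply, LinearMap.smulRight_apply,
      LinearMap.proj_apply, smul_eq_mul]
    refine Finset.sum_congr rfl fun t _ => ?_
    rw [show sig q (t : ℕ) = ∑ s ∈ Finset.range (t : ℕ), q ^ s from rfl]
    ring
  have hΨop : ∀ (f : Fin k → K) (i : Fin ℓ) (j : Fin (nn i)),
      Ψ f i j = op Fq f (a i : K) (β (Fin.castLE (hnm i) j)) := by
    intro f i j
    rw [hΨapply, op_apply, ← hq]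
    rfl
  have hkey : ∀ f : Fin k → K, f ≠ 0 →
      ∑ i, Module.finrank Fq (LinearMap.ker (op Fq f (a i : K))) ≤ k - 1 :=
    fun f hf => key hcard a (fun i j hij => ha i j hij) k f hf
  -- the β-span submodules
  set W : Fin ℓ → Submodule Fq K :=
    fun i => Submodule.span Fq (Set.range fun j : Fin (nn i) => β (Fin.castLE (hnm i) j))
    with hW
  have hWrank : ∀ i, Module.finrank Fq (W i) = nn i := by
    intro i
    have hli : LinearIndependent Fq (fun j : Fin (nn i) => β (Fin.castLE (hnm i) j)) :=
      β.linearIndependent.comp _ (Fin.castLE_injective _)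
    rw [hW, finrank_span_eq_card hli, Fintype.card_fin]
  have hmaps : ∀ (f : Fin k → K) (i : Fin ℓ), ∀ x ∈ W i,
      op Fq f (a i : K) x ∈ Submodule.span Fq (Set.range (Ψ f i)) := by
    intro f i
    have hle : W i ≤ Submodule.comap (op Fq f (a i : K))
        (Submodule.span Fq (Set.range (Ψ f i))) := by
      rw [hW, Submodule.span_le]
      rintro x ⟨j, rfl⟩
      rw [SetLike.mem_coe, Submodule.mem_comap, ← hΨop]
      exact Submodule.subset_span (Set.mem_range_self j)
    exact fun x hx => hle hx
  have hineq : ∀ f : Fin k → K, f ≠ 0 →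
      n ≤ (∑ i, Module.finrank Fq (Submodule.span Fq (Set.range (Ψ f i)))) + (k - 1) := by
    intro f hf
    have h1 : ∀ i, nn i ≤ Module.finrank Fq (Submodule.span Fq (Set.range (Ψ f i))) +
        Module.finrank Fq (LinearMap.ker (op Fq f (a i : K))) := by
      intro i
      have h2 := finrank_le_of_maps_to (op Fq f (a i : K)) (W i)
        (Submodule.span Fq (Set.range (Ψ f i))) (hmaps f i)
      rw [hWrank i] at h2
      exact h2
    calc n = ∑ i, nn i := hn
      _ ≤ ∑ i, (Module.finrank Fq (Submodule.span Fq (Set.range (Ψ f i))) +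
          Module.finrank Fq (LinearMap.ker (op Fq f (a i : K)))) :=
        Finset.sum_le_sum fun i _ => h1 i
      _ = (∑ i, Module.finrank Fq (Submodule.span Fq (Set.range (Ψ f i)))) +
          ∑ i, Module.finrank Fq (LinearMap.ker (op Fq f (a i : K))) :=
        Finset.sum_add_distrib
      _ ≤ _ := Nat.add_le_add_left (hkey f hf) _
  -- injectivity of the encoding
  have hinj : Function.Injective Ψ := by
    rw [← LinearMap.ker_eq_bot, LinearMap.ker_eq_bot']
    intro f hf0
    by_contra hne
    have hz : ∀ i, Module.finrank Fq (Submodule.span Fq (Set.range (Ψ f i))) = 0 := by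
      intro i
      have : Submodule.span Fq (Set.range (Ψ f i)) = ⊥ := by
        rw [Submodule.span_eq_bot]
        rintro x ⟨j, rfl⟩
        rw [hf0]
        rfl
      rw [this]
      exact finrank_bot Fq K
    have := hineq f hne
    rw [Finset.sum_congr rfl (fun i _ => hz i)] at this
    simp only [Finset.sum_const_zero, zero_add] at this
    omega
  -- the distance bound (for arbitrary nonzero codewords)
  have hdist : ∀ f : Fin k → K, Ψ f ≠ 0 → n - k + 1 ≤ srkVec Fq (Ψ f) := by
    intro f hfne
    have hf : f ≠ 0 := by
      rintro rfl
      rw [map_zero] at hfne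
      exact hfne rfl
    have := hineq f hf
    have hsrk : srkVec Fq (Ψ f) =
        ∑ i, Module.finrank Fq (Submodule.span Fq (Set.range (Ψ f i))) := rfl
    omega
  -- a codeword of weight exactly n - k + 1
  have hcardsig : Fintype.card ((i : Fin ℓ) × Fin (nn i)) = n := by
    rw [Fintype.card_sigma, hn]
    simp
  let e : ((i : Fin ℓ) × Fin (nn i)) ≃ Fin n := Fintype.equivFinOfCardEq hcardsig
  have hk1n : k - 1 ≤ n := by omega
  set Φ : (Fin k → K) →ₗ[K] (Fin (k-1) → K) :=
    LinearMap.pi (fun s => (LinearMap.proj (e.symm (Fin.castLE hk1n s)).2).comp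
      ((LinearMap.proj (e.symm (Fin.castLE hk1n s)).1).comp Ψ)) with hΦ
  have hdimpi : ∀ N : ℕ, Module.finrank K (Fin N → K) = N := fun N => by simp
  obtain ⟨f, hf0, hΦf⟩ : ∃ f : Fin k → K, f ≠ 0 ∧ Φ f = 0 := by
    by_contra h
    push_neg at h
    have hinjΦ : Function.Injective Φ := by
      rw [← LinearMap.ker_eq_bot, LinearMap.ker_eq_bot']
      intro f hf0
      by_contra hne
      exact h f hne hf0
    have := LinearMap.finrank_le_finrank_of_injective hinjΦ
    rw [hdimpi k, hdimpi (k-1)] at this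
    omega
  have hc0 : Ψ f ≠ 0 := fun h => hf0 (hinj (by rw [h, map_zero]))
  have hzero : ∀ p : (i : Fin ℓ) × Fin (nn i), ((e p : ℕ) < k - 1) → Ψ f p.1 p.2 = 0 := by
    intro p hp
    have h1 := congrFun hΦf (⟨(e p : ℕ), hp⟩ : Fin (k-1))
    rw [hΦ] at h1
    simp only [LinearMap.pi_apply, LinearMap.comp_apply, LinearMap.proj_apply,
      Pi.zero_apply] at h1
    have h2 : Fin.castLE hk1n (⟨(e p : ℕ), hp⟩ : Fin (k-1)) = e p := by
      apply Fin.ext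
      rfl
    rw [h2, Equiv.symm_apply_apply] at h1
    exact h1
  set z : Fin ℓ → ℕ :=
    fun i => (Finset.univ.filter (fun j : Fin (nn i) => ((e ⟨i, j⟩ : ℕ) < k - 1))).card with hz
  have hz_le : ∀ i, z i ≤ nn i := by
    intro i
    calc z i ≤ (Finset.univ : Finset (Fin (nn i))).card := Finset.card_filter_le _ _
      _ = nn i := by simp
  have hzsum : ∑ i, z i = k - 1 := by
    have hsig : (Finset.univ.sigma (fun i : Fin ℓ =>
        Finset.univ.filter (fun j : Fin (nn i) => ((e ⟨i, j⟩ : ℕ) < k - 1)))) =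
        Finset.univ.filter (fun p : (i : Fin ℓ) × Fin (nn i) => ((e p : ℕ) < k - 1)) := by
      ext ⟨i, j⟩
      simp
    have h7 : ∑ i, z i = (Finset.univ.filter
        (fun p : (i : Fin ℓ) × Fin (nn i) => ((e p : ℕ) < k - 1))).card := by
      rw [← hsig, Finset.card_sigma]
    have h8 : (Finset.univ.filter
        (fun p : (i : Fin ℓ) × Fin (nn i) => ((e p : ℕ) < k - 1))).card =
        (Finset.univ.filter (fun x : Fin n => (x : ℕ) < k - 1)).card := by
      apply Finset.card_bij' (fun p _ => e p) (fun x _ => e.symm x)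
      · intro p hp
        simp only [Finset.mem_filter, Finset.mem_univ, true_and] at hp ⊢
        exact hp
      · intro x hx
        simp only [Finset.mem_filter, Finset.mem_univ, true_and] at hx ⊢
        rwa [Equiv.apply_symm_apply]
      · intro p _
        exact e.symm_apply_apply p
      · intro x _
        exact e.apply_symm_apply x
    have h9 : (Finset.univ.filter (fun x : Fin n => (x : ℕ) < k - 1)).card = k - 1 := by
      rw [Finset.card_filter]
      rw [Fin.sum_univ_eq_sum_range (fun t => if t < k - 1 then 1 else 0) n]
      rw [← Finset.card_filter]
      have h15 : (Finset.range n).filter (fun t => t < k - 1) = Finset.range (k-1) := by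
        ext t
        simp only [Finset.mem_filter, Finset.mem_range]
        omega
      rw [h15, Finset.card_range]
    omega
  have hblock : ∀ i, Module.finrank Fq (Submodule.span Fq (Set.range (Ψ f i))) ≤ nn i - z i := by
    intro i
    set s : Finset K :=
      (Finset.univ.filter (fun j : Fin (nn i) => Ψ f i j ≠ 0)).image (Ψ f i) with hs
    have hsp : Submodule.span Fq (Set.range (Ψ f i)) ≤ Submodule.span Fq (s : Set K) := by
      rw [Submodule.span_le]
      rintro x ⟨j, rfl⟩
      by_cases h0 : Ψ f i j = 0
      · rw [h0]
        exact Submodule.zero_mem _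
      · apply Submodule.subset_span
        rw [hs]
        simp only [Finset.coe_image, Set.mem_image, Finset.mem_coe, Finset.mem_filter,
          Finset.mem_univ, true_and]
        exact ⟨j, h0, rfl⟩
    have h10 : Module.finrank Fq (Submodule.span Fq (Set.range (Ψ f i))) ≤ s.card :=
      le_trans (Submodule.finrank_mono hsp) (finrank_span_finset_le_card s)
    have h11 : s.card ≤ (Finset.univ.filter (fun j : Fin (nn i) => Ψ f i j ≠ 0)).card :=
      Finset.card_image_le
    have h12 : (Finset.univ.filter (fun j : Fin (nn i) => Ψ f i j ≠ 0)).card ≤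
        (Finset.univ.filter (fun j : Fin (nn i) => ¬ ((e ⟨i, j⟩ : ℕ) < k - 1))).card := by
      apply Finset.card_le_card
      intro j hj
      simp only [Finset.mem_filter, Finset.mem_univ, true_and] at hj ⊢
      intro hlt
      exact hj (hzero ⟨i, j⟩ hlt)
    have h13 : (Finset.univ.filter (fun j : Fin (nn i) => ((e ⟨i, j⟩ : ℕ) < k - 1))).card +
        (Finset.univ.filter (fun j : Fin (nn i) => ¬ ((e ⟨i, j⟩ : ℕ) < k - 1))).card = nn i := by
      have h16 := Finset.card_filter_add_card_filter_not
        (s := (Finset.univ : Finset (Fin (nn i))))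
        (p := fun j : Fin (nn i) => ((e ⟨i, j⟩ : ℕ) < k - 1))
      rw [Finset.card_univ, Fintype.card_fin] at h16
      convert h16 using 3
    have hzi : z i = (Finset.univ.filter
        (fun j : Fin (nn i) => ((e ⟨i, j⟩ : ℕ) < k - 1))).card := rfl
    omega
  have hsrk_le : srkVec Fq (Ψ f) ≤ n - (k - 1) := by
    have h14 : srkVec Fq (Ψ f) =
        ∑ i, Module.finrank Fq (Submodule.span Fq (Set.range (Ψ f i))) := rfl
    rw [h14]
    calc ∑ i, Module.finrank Fq (Submodule.span Fq (Set.range (Ψ f i)))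
        ≤ ∑ i, (nn i - z i) := Finset.sum_le_sum fun i _ => hblock i
      _ = (∑ i, nn i) - ∑ i, z i := Finset.sum_tsub_distrib _ (fun i _ => hz_le i)
      _ = n - (k - 1) := by rw [hzsum, ← hn]
  have hsrk : srkVec Fq (Ψ f) = n - k + 1 := by
    have := hdist f hc0
    omega
  -- final assembly
  refine ⟨LinearMap.range Ψ, ?_, ?_, ?_, ?_⟩
  · ext c
    simp only [SetLike.mem_coe, LinearMap.mem_range, Set.mem_setOf_eq]
    constructor
    · rintro ⟨f', rfl⟩
      exact ⟨f', fun i j => hΨapply f' i j⟩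
    · rintro ⟨f', hf'⟩
      refine ⟨f', funext fun i => funext fun j => ?_⟩
      rw [hΨapply]
      exact (hf' i j).symm
  · rw [LinearMap.finrank_range_of_inj hinj, hdimpi k]
  · rintro c ⟨f', rfl⟩ hcne
    exact hdist f' hcne
  · have hmem : n - k + 1 ∈ {w | ∃ c ∈ LinearMap.range Ψ, c ≠ 0 ∧ srkVec Fq c = w} :=
      ⟨Ψ f, ⟨f, rfl⟩, hc0, hsrk⟩
    refine le_antisymm (Nat.sInf_le hmem) (le_csInf ⟨_, hmem⟩ ?_)
    rintro w ⟨c, ⟨f', rfl⟩, hcne, rfl⟩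
    exact hdist f' hcne
end
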